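/- arXiv:1105.1349 — 3 statements merged into one kernel-verified Lean document; each statement's English description precedes it below -/
import Mathlib

section
/- Let B ⊆ ℂ be open and connected, and let u : 𝕋_h × B → ℂ be analytic with Du = 0. Then there exists a unique analytic function c : ⋃_{τ∈B} (τ + 𝕋_h) → ℂ (the domain taken as a subset of ℂ/2πℤ) such that u(φ,τ) = c(τ − φ) for all (φ,τ) ∈ 𝕋_h × B. -/
noncomputable section
open Complex Set

def Strip (h : ℝ) : Set ℂ := {z : ℂ | |z.im| < h}

open Metric


def Band (h a : ℝ) : Set ℂ := {s : ℂ | |s.im - a| < h}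

lemma band_open (h a : ℝ) : IsOpen (Band h a) := by
  have : Band h a = Complex.im ⁻¹' (Ioo (a - h) (a + h)) := by
    ext z; simp only [Band, mem_setOf_eq, mem_preimage, mem_Ioo, abs_sub_lt_iff]
    constructor <;> intro ⟨h1, h2⟩ <;> constructor <;> linarith
  rw [this]; exact (isOpen_Ioo).preimage Complex.continuous_im

lemma band_convex (h a : ℝ) : Convex ℝ (Band h a) := by
  have : Band h a = Complex.imLm ⁻¹' (Ioo (a - h) (a + h)) := by
    ext z; simp only [Band, mem_setOf_eq, mem_preimage, mem_Ioo, abs_sub_lt_iff, Complex.imLm,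
      LinearMap.coe_mk, AddHom.coe_mk]
    constructor <;> intro ⟨h1, h2⟩ <;> constructor <;> linarith
  rw [this]; exact (convex_Ioo _ _).linear_preimage _

lemma mem_band_iff (h a : ℝ) (s : ℂ) : s ∈ Band h a ↔ |s.im - a| < h := Iff.rfl

lemma im_abs_le_norm (z : ℂ) : |z.im| ≤ ‖z‖ := Complex.abs_im_le_norm z

lemma L1 (h : ℝ) (B : Set ℂ) (u : ℂ → ℂ → ℂ)
    (huan : AnalyticOnNhd ℂ (fun p : ℂ × ℂ => u p.1 p.2) (Strip h ×ˢ B))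
    (hD : ∀ φ ∈ Strip h, ∀ τ ∈ B,
      deriv (fun x => u x τ) φ + deriv (fun x => u φ x) τ = 0)
    (s τ : ℂ) (hτ : τ ∈ B) (hst : τ - s ∈ Strip h) :
    HasDerivAt (fun τ' => u (τ' - s) τ') 0 τ := by
  set p : ℂ × ℂ := (τ - s, τ) with hp
  have hmem : p ∈ Strip h ×ˢ B := ⟨hst, hτ⟩
  have hA : AnalyticAt ℂ (fun p : ℂ × ℂ => u p.1 p.2) p := huan p hmem
  have hd : HasFDerivAt (fun p : ℂ × ℂ => u p.1 p.2) (fderiv ℂ (fun p : ℂ × ℂ => u p.1 p.2) p) p :=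
    hA.differentiableAt.hasFDerivAt
  set d := fderiv ℂ (fun p : ℂ × ℂ => u p.1 p.2) p with hdd
  have h1 : HasDerivAt (fun x => u x τ) (d (1, 0)) (τ - s) := by
    have hin : HasDerivAt (fun x : ℂ => ((x, τ) : ℂ × ℂ)) ((1 : ℂ), (0 : ℂ)) (τ - s) :=
      (hasDerivAt_id _).prodMk (hasDerivAt_const _ _)
    exact hd.comp_hasDerivAt (τ - s) hin
  have h2 : HasDerivAt (fun y => u (τ - s) y) (d (0, 1)) τ := by
    have hin : HasDerivAt (fun y : ℂ => ((τ - s, y) : ℂ × ℂ)) ((0 : ℂ), (1 : ℂ)) τ :=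
      (hasDerivAt_const _ _).prodMk (hasDerivAt_id _)
    exact hd.comp_hasDerivAt τ hin
  have h3 : HasDerivAt (fun τ' => u (τ' - s) τ') (d (1, 1)) τ := by
    have hin : HasDerivAt (fun τ' : ℂ => ((τ' - s, τ') : ℂ × ℂ)) ((1 : ℂ), (1 : ℂ)) τ :=
      ((hasDerivAt_id _).sub_const s).prodMk (hasDerivAt_id _)
    exact hd.comp_hasDerivAt_of_eq τ hin rfl
  have hsum : d (1, 1) = d (1, 0) + d (0, 1) := by
    rw [← map_add]; norm_num
  have hzero : d (1, 1) = 0 := by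
    rw [hsum, ← h1.deriv, ← h2.deriv]; exact hD (τ - s) hst τ hτ
  rwa [hzero] at h3

-- analyticity of f τ on the band
lemma f_an (h : ℝ) (B : Set ℂ) (u : ℂ → ℂ → ℂ)
    (huan : AnalyticOnNhd ℂ (fun p : ℂ × ℂ => u p.1 p.2) (Strip h ×ˢ B))
    (τ : ℂ) (hτ : τ ∈ B) :
    AnalyticOnNhd ℂ (fun s => u (τ - s) τ) (Band h τ.im) := by
  have hin : AnalyticOnNhd ℂ (fun s : ℂ => ((τ - s, τ) : ℂ × ℂ)) (Band h τ.im) := by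
    apply AnalyticOnNhd.prod
    · exact (analyticOnNhd_const).sub analyticOnNhd_id
    · exact analyticOnNhd_const
  have hmaps : MapsTo (fun s : ℂ => ((τ - s, τ) : ℂ × ℂ)) (Band h τ.im) (Strip h ×ˢ B) := by
    intro s hs
    refine ⟨?_, hτ⟩
    simp only [Strip, mem_setOf_eq, Complex.sub_im]
    rw [mem_band_iff] at hs
    rw [abs_sub_comm] at hs
    exact hs
  exact huan.comp hin hmaps

lemma const_of_zero_fderiv (W : Set ℂ) (hW : Convex ℝ W) (f : ℂ → ℂ)
    (hf : ∀ x ∈ W, HasFDerivAt f (0 : ℂ →L[ℂ] ℂ) x) {x y : ℂ}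
    (hx : x ∈ W) (hy : y ∈ W) : f x = f y := by
  have h0 : ∀ z ∈ W, HasFDerivWithinAt f ((0 : ℂ →L[ℂ] ℂ).restrictScalars ℝ) W z :=
    fun z hz => ((hf z hz).restrictScalars ℝ).hasFDerivWithinAt
  have := hW.norm_image_sub_le_of_norm_hasFDerivWithin_le (f' := fun _ => (0 : ℂ →L[ℂ] ℂ).restrictScalars ℝ)
    (C := 0) h0 (fun z _ => by simp) hy hx
  rw [zero_mul] at this
  exact sub_eq_zero.mp (norm_le_zero_iff.mp this)

lemma band_mem_iff' (h a : ℝ) (s : ℂ) : s ∈ Band h a ↔ |s.im - a| < h := Iff.rfl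

/-- local step: nearby parameters give the same function on the band overlap. -/
lemma stepL4 (h : ℝ) (hh : 0 < h) (B : Set ℂ) (u : ℂ → ℂ → ℂ)
    (huan : AnalyticOnNhd ℂ (fun p : ℂ × ℂ => u p.1 p.2) (Strip h ×ˢ B))
    (hD : ∀ φ ∈ Strip h, ∀ τ ∈ B,
      deriv (fun x => u x τ) φ + deriv (fun x => u φ x) τ = 0)
    (τ' τ'' : ℂ) (ε : ℝ) (hε : 0 < ε) (hball : ball τ' ε ⊆ B)
    (hcl : ‖τ'' - τ'‖ < ε) (hclh : ‖τ'' - τ'‖ < h) :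
    EqOn (fun s => u (τ' - s) τ') (fun s => u (τ'' - s) τ'')
      (Band h τ'.im ∩ Band h τ''.im) := by
  have hτ'B : τ' ∈ B := hball (mem_ball_self hε)
  have hτ''B : τ'' ∈ B := hball (by simpa [mem_ball, dist_eq_norm] using hcl)
  set δ : ℝ := h - ‖τ'' - τ'‖ with hδdef
  have hδ : 0 < δ := by rw [hδdef]; linarith
  have claim1 : ∀ s ∈ ball τ' δ, u (τ' - s) τ' = u (τ'' - s) τ'' := by
    intro s hs
    have hsd : ‖τ' - s‖ < δ := by
      rw [mem_ball, dist_comm, dist_eq_norm] at hs; exact hs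
    set W : Set ℂ := ball τ' ε ∩ Band h s.im with hW
    have hWconv : Convex ℝ W := (convex_ball τ' ε).inter (band_convex h s.im)
    have hderiv : ∀ τ ∈ W, HasFDerivAt (fun τ => u (τ - s) τ) (0 : ℂ →L[ℂ] ℂ) τ := by
      intro τ hτW
      have hτB : τ ∈ B := hball hτW.1
      have hstrip : τ - s ∈ Strip h := by
        have := hτW.2
        rw [mem_band_iff] at this
        simpa [Strip, Complex.sub_im] using this
      have h0 := L1 h B u huan hD s τ hτB hstrip
      have := h0.hasFDerivAt
      convert this using 1
      ext z
      simp
      rw [ContinuousLinearMap.toSpanSingleton_zero]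
    have hτ'W : τ' ∈ W := by
      refine ⟨mem_ball_self hε, ?_⟩
      rw [mem_band_iff]
      calc |τ'.im - s.im| = |(τ' - s).im| := by rw [Complex.sub_im]
        _ ≤ ‖τ' - s‖ := Complex.abs_im_le_norm _
        _ < δ := hsd
        _ ≤ h := sub_le_self _ (norm_nonneg _)
    have hτ''W : τ'' ∈ W := by
      refine ⟨by simpa [mem_ball, dist_eq_norm] using hcl, ?_⟩
      rw [mem_band_iff]
      have him : τ''.im - s.im = (τ'' - τ').im + (τ' - s).im := by
        simp [Complex.sub_im]
        try ring
      rw [him]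
      calc |(τ'' - τ').im + (τ' - s).im| ≤ |(τ'' - τ').im| + |(τ' - s).im| := abs_add_le _ _
        _ ≤ ‖τ'' - τ'‖ + ‖τ' - s‖ :=
            add_le_add (Complex.abs_im_le_norm _) (Complex.abs_im_le_norm _)
        _ < ‖τ'' - τ'‖ + δ := by linarith
        _ = h := by rw [hδdef]; ring
    exact const_of_zero_fderiv W hWconv _ hderiv hτ'W hτ''W
  -- now the identity theorem on the band overlap
  have hconv : Convex ℝ (Band h τ'.im ∩ Band h τ''.im) :=
    (band_convex h τ'.im).inter (band_convex h τ''.im)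
  have hτ'mem : τ' ∈ Band h τ'.im ∩ Band h τ''.im := by
    constructor
    · rw [mem_band_iff]; simpa using hh
    · rw [mem_band_iff]
      calc |τ'.im - τ''.im| = |(τ'' - τ').im| := by rw [Complex.sub_im, abs_sub_comm]
        _ ≤ ‖τ'' - τ'‖ := Complex.abs_im_le_norm _
        _ < h := hclh
  have hev : (fun s => u (τ' - s) τ') =ᶠ[nhds τ'] (fun s => u (τ'' - s) τ'') := by
    apply Filter.eventuallyEq_of_mem (isOpen_ball.mem_nhds (mem_ball_self hδ))
    intro s hs
    exact claim1 s hs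
  exact ((f_an h B u huan τ' hτ'B).mono inter_subset_left).eqOn_of_preconnected_of_eventuallyEq
    ((f_an h B u huan τ'' hτ''B).mono inter_subset_right) hconv.isPreconnected hτ'mem hev

/-- Glue lemma: three analytic functions on bands, consecutive agreement, pairwise close
centers, then outer two agree on their overlap. -/
lemma glue (h : ℝ) (hh : 0 < h) (a b c : ℝ) (f g k : ℂ → ℂ)
    (hf : AnalyticOnNhd ℂ f (Band h a)) (hk : AnalyticOnNhd ℂ k (Band h c))
    (hab : |a - b| < 2 * h) (hbc : |b - c| < 2 * h) (hac : |a - c| < 2 * h)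
    (h1 : EqOn f g (Band h a ∩ Band h b)) (h2 : EqOn g k (Band h b ∩ Band h c)) :
    EqOn f k (Band h a ∩ Band h c) := by
  set m : ℝ := (max a (max b c) + min a (min b c)) / 2 with hm
  set z₀ : ℂ := (m : ℂ) * Complex.I with hz
  have hz₀im : z₀.im = m := by simp [hz]
  have hMm : max a (max b c) - min a (min b c) < 2 * h := by
    rw [abs_sub_lt_iff] at hab hbc hac
    rcases le_total a b with h1' | h1' <;> rcases le_total b c with h2' | h2' <;>
      rcases le_total a c with h3' | h3' <;>
      simp [max_def, min_def, h1', h2', h3'] <;> linarith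
  have habs : ∀ x ∈ ({a, b, c} : Set ℝ), |m - x| < h := by
    intro x hx
    simp only [mem_insert_iff, mem_singleton_iff] at hx
    rw [abs_sub_lt_iff]
    have hx1 : min a (min b c) ≤ x ∧ x ≤ max a (max b c) := by
      rcases hx with rfl | rfl | rfl
      · exact ⟨min_le_left _ _, le_max_left _ _⟩
      · exact ⟨le_trans (min_le_right _ _) (min_le_left _ _),
          le_trans (le_max_left _ _) (le_max_right _ _)⟩
      · exact ⟨le_trans (min_le_right _ _) (min_le_right _ _),
          le_trans (le_max_right _ _) (le_max_right _ _)⟩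
    constructor <;> linarith [hx1.1, hx1.2, hMm, hm]
  have hza : z₀ ∈ Band h a := by
    simp only [Band, mem_setOf_eq, hz₀im]
    exact habs a (by simp)
  have hzb : z₀ ∈ Band h b := by
    simp only [Band, mem_setOf_eq, hz₀im]
    exact habs b (by simp)
  have hzc : z₀ ∈ Band h c := by
    simp only [Band, mem_setOf_eq, hz₀im]
    exact habs c (by simp)
  have hopen : IsOpen (Band h a ∩ Band h b ∩ Band h c) :=
    ((band_open h a).inter (band_open h b)).inter (band_open h c)
  have hev : f =ᶠ[nhds z₀] k := by
    apply Filter.eventuallyEq_of_mem (hopen.mem_nhds ⟨⟨hza, hzb⟩, hzc⟩)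
    intro z hz'
    rw [h1 ⟨hz'.1.1, hz'.1.2⟩, h2 ⟨hz'.1.2, hz'.2⟩]
  exact (hf.mono inter_subset_left).eqOn_of_preconnected_of_eventuallyEq
    (hk.mono inter_subset_right)
    (((band_convex h a).inter (band_convex h c)).isPreconnected) ⟨hza, hzc⟩ hev
noncomputable section
open Complex Set Metric

/-- discrete upcrossing lemma -/
lemma discIVT (h : ℝ) (a : ℕ → ℝ) (n j : ℕ) (L : ℝ)
    (hsteps : ∀ k, j ≤ k → k < n → a (k + 1) - a k < h)
    (hj : a j ≤ L) (hn : L < a n) (hjn : j ≤ n) :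
    ∃ m, j < m ∧ m ≤ n ∧ L < a m ∧ a m < L + h := by
  have hex : ∃ m, j < m ∧ m ≤ n ∧ L < a m := by
    refine ⟨n, ?_, le_rfl, hn⟩
    rcases lt_or_eq_of_le hjn with h' | h'
    · exact h'
    · exfalso; rw [h'] at hj; linarith
  classical
  let m := Nat.find hex
  obtain ⟨hm1, hm2, hm3⟩ := Nat.find_spec hex
  refine ⟨m, hm1, hm2, hm3, ?_⟩
  have hm1' : j ≤ m - 1 := by omega
  have hmpos : m - 1 + 1 = m := by omega
  have hprev : a (m - 1) ≤ L := by
    rcases eq_or_lt_of_le hm1' with h' | h'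
    · rw [← h']; exact hj
    · by_contra hcon
      push_neg at hcon
      have := Nat.find_min hex (m := m - 1) (by omega)
      push_neg at this
      have h1 : j < m - 1 := h'
      have h2 : m - 1 ≤ n := by omega
      linarith [this h1 h2]
  have hstep : a (m - 1 + 1) - a (m - 1) < h := hsteps (m - 1) hm1' (by omega)
  rw [hmpos] at hstep
  linarith

/-- Discrete monodromy: a chain of analytic functions on bands with small steps and
consecutive agreement has all pairs agreeing on (nonempty) overlaps. -/
lemma chainT (h : ℝ) (hh : 0 < h) (a : ℕ → ℝ) (g : ℕ → ℂ → ℂ) :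
    ∀ n : ℕ, (∀ k, k ≤ n → AnalyticOnNhd ℂ (g k) (Band h (a k))) →
      (∀ k, k < n → |a (k + 1) - a k| < h) →
      (∀ k, k < n → EqOn (g k) (g (k + 1)) (Band h (a k) ∩ Band h (a (k + 1)))) →
      ∀ i j, i ≤ n → j ≤ n → |a i - a j| < 2 * h →
        EqOn (g i) (g j) (Band h (a i) ∩ Band h (a j)) := by
  intro n
  induction n with
  | zero =>
    intro _ _ _ i j hi hj _
    interval_cases i
    interval_cases j
    exact fun s _ => rfl
  | succ n IH =>
    intro han hsteps heq i j hi hj hij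
    have han' : ∀ k, k ≤ n → AnalyticOnNhd ℂ (g k) (Band h (a k)) :=
      fun k hk => han k (le_trans hk (Nat.le_succ n))
    have hsteps' : ∀ k, k < n → |a (k + 1) - a k| < h :=
      fun k hk => hsteps k (Nat.lt_succ_of_lt hk)
    have heq' : ∀ k, k < n → EqOn (g k) (g (k + 1)) (Band h (a k) ∩ Band h (a (k + 1))) :=
      fun k hk => heq k (Nat.lt_succ_of_lt hk)
    have IH' := IH han' hsteps' heq'
    -- key case: i ≤ n, j = n + 1
    have key : ∀ i', i' ≤ n → |a i' - a (n + 1)| < 2 * h →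
        EqOn (g i') (g (n + 1)) (Band h (a i') ∩ Band h (a (n + 1))) := by
      intro i' hi' hij'
      have hstepn : |a (n + 1) - a n| < h := hsteps n (Nat.lt_succ_self n)
      have heqn : EqOn (g n) (g (n + 1)) (Band h (a n) ∩ Band h (a (n + 1))) :=
        heq n (Nat.lt_succ_self n)
      rw [abs_sub_lt_iff] at hij' hstepn
      by_cases hin : |a i' - a n| < 2 * h
      · -- direct glue through n
        refine glue h hh (a i') (a n) (a (n + 1)) (g i') (g n) (g (n + 1))
          (han' i' hi') (han (n + 1) le_rfl) hin ?_ ?_ (IH' i' n hi' le_rfl hin) heqn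
        · rw [abs_sub_lt_iff]; constructor <;> linarith
        · rw [abs_sub_lt_iff]; constructor <;> linarith
      · rw [not_lt] at hin
        rcases abs_cases (a i' - a n) with ⟨habs, _⟩ | ⟨habs, _⟩
        · -- a i' - a n ≥ 2h, i.e. a n ≤ a i' - 2h : downward mountain
          rw [habs] at hin
          -- a (n+1) ∈ (a i' - 2h, a i' - h)
          have h1 : a (n + 1) < a i' - h := by linarith
          have h2 : a i' - 2 * h < a (n + 1) := by linarith
          -- find m with a (n+1) < a m < a (n+1) + h
          obtain ⟨m, him, hmn, hm1, hm2⟩ := discIVT h (fun k => -(a k)) n i' (-(a (n + 1)) - h)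
            (fun k hk1 hk2 => by
              have := hsteps k (Nat.lt_succ_of_lt hk2)
              rw [abs_sub_lt_iff] at this
              show -(a (k + 1)) - -(a k) < h
              linarith [this.2])
            (by show -(a i') ≤ -(a (n + 1)) - h; linarith)
            (by show -(a (n + 1)) - h < -(a n); linarith)
            hi'
          have hm1b : -(a (n + 1)) - h < -(a m) := hm1
          have hm2b : -(a m) < -(a (n + 1)) - h + h := hm2
          have hm1' : a m < a (n + 1) + h := by linarith
          have hm2' : a (n + 1) < a m := by linarith
          -- step1 : g m = g (n+1) via n
          have hmn2 : |a m - a n| < 2 * h := by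
            rw [abs_sub_lt_iff]; constructor <;> linarith
          have step1 : EqOn (g m) (g (n + 1)) (Band h (a m) ∩ Band h (a (n + 1))) := by
            refine glue h hh (a m) (a n) (a (n + 1)) (g m) (g n) (g (n + 1))
              (han' m hmn) (han (n + 1) le_rfl) hmn2 ?_ ?_ (IH' m n hmn le_rfl hmn2) heqn
            · rw [abs_sub_lt_iff]; constructor <;> linarith
            · rw [abs_sub_lt_iff]; constructor <;> linarith
          have himd : |a i' - a m| < 2 * h := by
            rw [abs_sub_lt_iff]; constructor <;> linarith
          have step2 : EqOn (g i') (g m) (Band h (a i') ∩ Band h (a m)) :=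
            IH' i' m hi' hmn himd
          refine glue h hh (a i') (a m) (a (n + 1)) (g i') (g m) (g (n + 1))
            (han' i' hi') (han (n + 1) le_rfl) himd ?_ ?_ step2 step1
          · rw [abs_sub_lt_iff]; constructor <;> linarith
          · rw [abs_sub_lt_iff]; constructor <;> linarith
        · -- a n - a i' ≥ 2h : upward mountain
          rw [habs] at hin
          have h1 : a i' + h < a (n + 1) := by linarith
          have h2 : a (n + 1) < a i' + 2 * h := by linarith
          obtain ⟨m, him, hmn, hm1, hm2⟩ := discIVT h a n i' (a (n + 1) - h)
            (fun k hk1 hk2 => by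
              have := hsteps k (Nat.lt_succ_of_lt hk2)
              rw [abs_sub_lt_iff] at this
              linarith [this.1])
            (by linarith) (by linarith) hi'
          have hm1' : a (n + 1) - h < a m := hm1
          have hm2' : a m < a (n + 1) := by linarith
          have hmn2 : |a m - a n| < 2 * h := by
            rw [abs_sub_lt_iff]; constructor <;> linarith
          have step1 : EqOn (g m) (g (n + 1)) (Band h (a m) ∩ Band h (a (n + 1))) := by
            refine glue h hh (a m) (a n) (a (n + 1)) (g m) (g n) (g (n + 1))
              (han' m hmn) (han (n + 1) le_rfl) hmn2 ?_ ?_ (IH' m n hmn le_rfl hmn2) heqn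
            · rw [abs_sub_lt_iff]; constructor <;> linarith
            · rw [abs_sub_lt_iff]; constructor <;> linarith
          have himd : |a i' - a m| < 2 * h := by
            rw [abs_sub_lt_iff]; constructor <;> linarith
          have step2 : EqOn (g i') (g m) (Band h (a i') ∩ Band h (a m)) :=
            IH' i' m hi' hmn himd
          refine glue h hh (a i') (a m) (a (n + 1)) (g i') (g m) (g (n + 1))
            (han' i' hi') (han (n + 1) le_rfl) himd ?_ ?_ step2 step1
          · rw [abs_sub_lt_iff]; constructor <;> linarith
          · rw [abs_sub_lt_iff]; constructor <;> linarith
    -- dispatch cases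
    rcases eq_or_lt_of_le hi with hi1 | hi1 <;> rcases eq_or_lt_of_le hj with hj1 | hj1
    · subst hi1; subst hj1; exact fun s _ => rfl
    · subst hi1
      have := key j (Nat.lt_succ_iff.mp hj1) (by rwa [abs_sub_comm])
      rw [inter_comm]
      exact this.symm
    · subst hj1; exact key i (Nat.lt_succ_iff.mp hi1) hij
    · exact IH' i j (Nat.lt_succ_iff.mp hi1) (Nat.lt_succ_iff.mp hj1) hij

lemma welldef (h : ℝ) (hh : 0 < h) (B : Set ℂ) (hB : IsOpen B)
    (hBconn : IsConnected B) (u : ℂ → ℂ → ℂ)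
    (huan : AnalyticOnNhd ℂ (fun p : ℂ × ℂ => u p.1 p.2) (Strip h ×ˢ B))
    (hD : ∀ φ ∈ Strip h, ∀ τ ∈ B,
      deriv (fun x => u x τ) φ + deriv (fun x => u φ x) τ = 0)
    (τ₀ : ℂ) (hτ₀ : τ₀ ∈ B) (τ₁ : ℂ) (hτ₁ : τ₁ ∈ B) :
    EqOn (fun s => u (τ₀ - s) τ₀) (fun s => u (τ₁ - s) τ₁)
      (Band h τ₀.im ∩ Band h τ₁.im) := by
  by_cases h2 : |τ₀.im - τ₁.im| < 2 * h
  swap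
  · -- empty intersection
    intro s hs
    exfalso
    rw [not_lt] at h2
    have h3 : |s.im - τ₀.im| < h := hs.1
    have h4 : |s.im - τ₁.im| < h := hs.2
    rw [abs_sub_lt_iff] at h3 h4
    rcases abs_cases (τ₀.im - τ₁.im) with ⟨he, _⟩ | ⟨he, _⟩ <;> rw [he] at h2 <;> linarith
  -- path, compactness, uniform continuity
  have hpc : IsPathConnected B := (hB.isConnected_iff_isPathConnected).mp hBconn
  have hjoin : JoinedIn B τ₀ τ₁ := hpc.joinedIn τ₀ hτ₀ τ₁ hτ₁
  set γ := hjoin.somePath with hγdef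
  have hγB : ∀ t, γ t ∈ B := hjoin.somePath_mem
  have hextB : ∀ t : ℝ, γ.extend t ∈ B := by
    intro t
    rcases le_or_gt t 0 with ht | ht
    · rw [γ.extend_of_le_zero ht]; exact hτ₀
    rcases le_or_gt 1 t with ht1 | ht1
    · rw [γ.extend_of_one_le ht1]; exact hτ₁
    · rw [γ.extend_apply ⟨le_of_lt ht, le_of_lt ht1⟩]; exact hγB _
  set K : Set ℂ := range γ.extend with hK
  have hKcompact : IsCompact K := by
    rw [hK, Path.extend_range]
    exact isCompact_range γ.continuous
  have hKB : K ⊆ B := by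
    rintro z ⟨t, rfl⟩; exact hextB t
  obtain ⟨ε, hεpos, hεsub⟩ := hKcompact.exists_cthickening_subset_open hB hKB
  have hball : ∀ x ∈ K, ball x ε ⊆ B := by
    intro x hx z hz
    apply hεsub
    apply Metric.thickening_subset_cthickening _ _
    rw [Metric.mem_thickening_iff]
    exact ⟨x, hx, by rwa [mem_ball] at hz⟩
  -- uniform continuity of extend
  have huc : UniformContinuous γ.extend := by
    have h1 : UniformContinuous γ := CompactSpace.uniformContinuous_of_continuous γ.continuous
    have h2 : UniformContinuous (projIcc (0:ℝ) 1 zero_le_one) :=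
      (LipschitzWith.projIcc _).uniformContinuous
    exact h1.comp h2
  obtain ⟨δ, hδpos, hδimp⟩ := Metric.uniformContinuous_iff.mp huc (min ε h) (lt_min hεpos hh)
  obtain ⟨n, hn⟩ := exists_nat_one_div_lt (K := ℝ) hδpos
  set N : ℕ := n + 1 with hN
  have hNpos : 0 < (N : ℝ) := by positivity
  -- the chain
  set a : ℕ → ℝ := fun k => (γ.extend ((k : ℝ) / N)).im with ha
  set g : ℕ → ℂ → ℂ := fun k => fun s =>
    u (γ.extend ((k : ℝ) / N) - s) (γ.extend ((k : ℝ) / N)) with hg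
  have hdist : ∀ k : ℕ, dist (γ.extend (((k+1) : ℕ) / N : ℝ)) (γ.extend ((k : ℝ) / N)) < min ε h := by
    intro k
    apply hδimp
    rw [Real.dist_eq]
    have he : (((k+1) : ℕ) : ℝ) / N - (k : ℝ) / N = 1 / N := by
      push_cast; field_simp
      ring
    rw [he, abs_of_pos (by positivity)]
    calc (1 : ℝ) / N = 1 / (n + 1 : ℝ) := by rw [hN]; push_cast; ring_nf
      _ < δ := hn
  have han : ∀ k, k ≤ N → AnalyticOnNhd ℂ (g k) (Band h (a k)) := by
    intro k _
    exact f_an h B u huan _ (hextB _)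
  have hsteps : ∀ k, k < N → |a (k + 1) - a k| < h := by
    intro k _
    have := hdist k
    rw [dist_eq_norm] at this
    calc |a (k + 1) - a k| = |(γ.extend (((k+1) : ℕ) / N : ℝ) - γ.extend ((k : ℝ) / N)).im| := by
          rw [ha]; simp [Complex.sub_im]
      _ ≤ ‖γ.extend (((k+1) : ℕ) / N : ℝ) - γ.extend ((k : ℝ) / N)‖ := Complex.abs_im_le_norm _
      _ < min ε h := this
      _ ≤ h := min_le_right _ _
  have heqs : ∀ k, k < N → EqOn (g k) (g (k + 1)) (Band h (a k) ∩ Band h (a (k + 1))) := by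
    intro k _
    have hd := hdist k
    rw [dist_eq_norm] at hd
    exact stepL4 h hh B u huan hD _ _ ε hεpos (hball _ (mem_range_self _))
      (lt_of_lt_of_le hd (min_le_left _ _)) (lt_of_lt_of_le hd (min_le_right _ _))
  have e0 : γ.extend (((0:ℕ) : ℝ) / N) = τ₀ := by
    norm_num
  have eN : γ.extend (((N:ℕ) : ℝ) / N) = τ₁ := by
    rw [div_self (ne_of_gt hNpos)]
    simpa [hγdef] using γ.extend_one
  have h2' : |a 0 - a N| < 2 * h := by
    rw [ha]; simp only []
    rw [e0, eN]
    exact h2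
  have := chainT h hh a g N han hsteps heqs 0 N (Nat.zero_le N) le_rfl h2'
  have hga : g 0 = fun s => u (τ₀ - s) τ₀ := by rw [hg]; simp only []; rw [e0]
  have hgb : g N = fun s => u (τ₁ - s) τ₁ := by rw [hg]; simp only []; rw [eN]
  have hba : Band h (a 0) = Band h τ₀.im := by rw [ha]; simp only []; rw [e0]
  have hbb : Band h (a N) = Band h τ₁.im := by rw [ha]; simp only []; rw [eN]
  rw [hga, hgb, hba, hbb] at this
  exact this

/-- if `u` is analytic on `𝕋_h × B` (encoded as a `2π`-periodic
function of `φ` on the strip) and `Du = 0`, then `u(φ,τ) = c(τ-φ)` for a unique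
analytic function `c` on `⋃_{τ∈B} (τ + 𝕋_h)` (functions on `ℂ/2πℤ` being
encoded as `2π`-periodic functions on `ℂ`). -/
theorem statement14 (h : ℝ) (hh : 0 < h) (B : Set ℂ) (hB : IsOpen B)
    (hBconn : IsConnected B) (u : ℂ → ℂ → ℂ)
    (huper : ∀ φ τ, u (φ + 2 * Real.pi) τ = u φ τ)
    (huan : AnalyticOnNhd ℂ (fun p : ℂ × ℂ => u p.1 p.2) (Strip h ×ˢ B))
    (hD : ∀ φ ∈ Strip h, ∀ τ ∈ B,
      deriv (fun x => u x τ) φ + deriv (fun x => u φ x) τ = 0) :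
    ∃ c : ℂ → ℂ,
      (∀ s, c (s + 2 * Real.pi) = c s) ∧
      AnalyticOnNhd ℂ c {s : ℂ | ∃ τ ∈ B, s - τ ∈ Strip h} ∧
      (∀ φ ∈ Strip h, ∀ τ ∈ B, u φ τ = c (τ - φ)) ∧
      ∀ c' : ℂ → ℂ,
        (∀ s, c' (s + 2 * Real.pi) = c' s) →
        AnalyticOnNhd ℂ c' {s : ℂ | ∃ τ ∈ B, s - τ ∈ Strip h} →
        (∀ φ ∈ Strip h, ∀ τ ∈ B, u φ τ = c' (τ - φ)) →
        EqOn c' c {s : ℂ | ∃ τ ∈ B, s - τ ∈ Strip h} := by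
  classical
  have W := welldef h hh B hB hBconn u huan hD
  have memband : ∀ (s τ : ℂ), s - τ ∈ Strip h ↔ s ∈ Band h τ.im := by
    intro s τ
    simp only [Strip, Band, mem_setOf_eq, Complex.sub_im]
  set c : ℂ → ℂ := fun s =>
    if hs : ∃ τ ∈ B, s - τ ∈ Strip h then u (hs.choose - s) hs.choose else 0 with hcdef
  have hc : ∀ (s τ : ℂ), τ ∈ B → s - τ ∈ Strip h → c s = u (τ - s) τ := by
    intro s τ hτB hst
    have hs : ∃ τ ∈ B, s - τ ∈ Strip h := ⟨τ, hτB, hst⟩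
    have h1 : c s = u (hs.choose - s) hs.choose := by
      rw [hcdef]; simp only []; rw [dif_pos hs]
    rw [h1]
    obtain ⟨hcB, hcs⟩ := hs.choose_spec
    exact W _ hcB _ hτB ⟨(memband s _).mp hcs, (memband s τ).mp hst⟩
  refine ⟨c, ?_, ?_, ?_, ?_⟩
  · -- periodicity
    intro s
    by_cases hs : ∃ τ ∈ B, s - τ ∈ Strip h
    · obtain ⟨τ, hτB, hst⟩ := hs
      have hst2 : s + 2 * (Real.pi : ℂ) - τ ∈ Strip h := by
        have him : (s + 2 * (Real.pi : ℂ) - τ).im = (s - τ).im := by simp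
        show |(s + 2 * (Real.pi : ℂ) - τ).im| < h
        rw [him]
        exact hst
      rw [hc (s + 2 * (Real.pi : ℂ)) τ hτB hst2, hc s τ hτB hst]
      have harg : τ - (s + 2 * (Real.pi : ℂ)) + 2 * (Real.pi : ℂ) = τ - s := by ring
      calc u (τ - (s + 2 * (Real.pi : ℂ))) τ
          = u (τ - (s + 2 * (Real.pi : ℂ)) + 2 * (Real.pi : ℂ)) τ := (huper _ τ).symm
        _ = u (τ - s) τ := by rw [harg]
    · have hs2 : ¬ ∃ τ ∈ B, s + 2 * (Real.pi : ℂ) - τ ∈ Strip h := by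
        rintro ⟨τ, hτB, hst⟩
        apply hs
        refine ⟨τ, hτB, ?_⟩
        have him : (s + 2 * (Real.pi : ℂ) - τ).im = (s - τ).im := by simp
        show |(s - τ).im| < h
        rw [← him]
        exact hst
      rw [hcdef]; simp only []; rw [dif_neg hs, dif_neg hs2]
  · -- analyticity
    intro s₀ hs₀
    obtain ⟨τ, hτB, hst⟩ := hs₀
    have heq : EqOn c (fun s => u (τ - s) τ) (Band h τ.im) :=
      fun s hsmem => hc s τ hτB ((memband s τ).mpr hsmem)
    refine ((f_an h B u huan τ hτB) s₀ ((memband _ _).mp hst)).congr ?_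
    exact Filter.eventuallyEq_of_mem
      ((band_open h τ.im).mem_nhds ((memband _ _).mp hst))
      (fun s hsm => (heq hsm).symm)
  · -- main equation
    intro φ hφ τ hτB
    have h1 : τ - φ - τ ∈ Strip h := by
      have he : τ - φ - τ = -φ := by ring
      rw [he]
      show |(-φ).im| < h
      rw [Complex.neg_im, abs_neg]
      exact hφ
    rw [hc (τ - φ) τ hτB h1]
    rw [show τ - (τ - φ) = φ from by ring]
  · -- uniqueness
    intro c' hper' han' heq' s hsS
    obtain ⟨τ, hτB, hst⟩ := hsS
    have hφ : τ - s ∈ Strip h := by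
      show |(τ - s).im| < h
      rw [Complex.sub_im, abs_sub_comm]
      exact hst
    have h1 := heq' (τ - s) hφ τ hτB
    rw [show τ - (τ - s) = s from by ring] at h1
    rw [hc s τ hτB hst, ← h1]
end
end
end

section
/- Let p ≥ 1. There exists a constant K_p > 0, depending only on p and θ, such that for every r > 0 and every τ ∈ D_r^−, ∫_{−∞}^0 |τ + s|^{−(p+1)} ds ≤ K_p |τ|^{−p}. -/
noncomputable section
open Complex Set MeasureTheory

def Dminus (θ r : ℝ) : Set ℂ := {τ : ℂ | θ < |(τ + (r:ℂ)).arg|}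

private lemma alg_ineq (θ x y s : ℝ) (hθc : 0 < Real.cos θ) (hs : s ≤ 0)
    (h : x < 0 ∨ Real.sin θ ^ 2 * (x^2+y^2) ≤ y^2) :
    (1 - Real.cos θ) * ((x^2+y^2) + s^2) ≤ (x+s)^2 + y^2 := by
  have hc1 : Real.cos θ ≤ 1 := Real.cos_le_one θ
  rcases h with h | h
  · nlinarith [mul_nonneg (neg_nonneg.2 h.le) (neg_nonneg.2 hs)]
  · have hsin : Real.sin θ^2 + Real.cos θ^2 = 1 := Real.sin_sq_add_cos_sq θ
    nlinarith [sq_nonneg (Real.cos θ * s + x), sq_nonneg s, sq_nonneg y]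

private lemma int_aux (a : ℝ) (ha : 0 < a) :
    Integrable (fun s : ℝ => (a^2+s^2)⁻¹) ∧
      (∫ s : ℝ, (a^2+s^2)⁻¹) = Real.pi / a := by
  have h1 : Integrable fun u : ℝ => (1+u^2)⁻¹ := integrable_inv_one_add_sq
  have h2 : Integrable fun s : ℝ => (1+(s/a)^2)⁻¹ := h1.comp_div ha.ne'
  have heq : (fun s : ℝ => (a^2+s^2)⁻¹) = fun s => (a^2)⁻¹ * (1+(s/a)^2)⁻¹ := by
    funext s; field_simp
  constructor
  · rw [heq]; exact h2.const_mul _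
  · rw [heq, MeasureTheory.integral_const_mul]
    rw [MeasureTheory.Measure.integral_comp_div (fun u : ℝ => (1+u^2)⁻¹) a,
      integral_univ_inv_one_add_sq, abs_of_pos ha, smul_eq_mul]
    field_simp

set_option maxHeartbeats 1000000 in
theorem statement15 (θ : ℝ) (hθ : 0 < θ) (hθ4 : θ < Real.pi / 4)
    (p : ℝ) (hp : 1 ≤ p) :
    ∃ K > (0:ℝ), ∀ r : ℝ, 0 < r → ∀ τ ∈ Dminus θ r,
      IntegrableOn (fun s : ℝ => 1 / ‖τ + (s:ℂ)‖ ^ (p+1)) (Set.Iic 0) ∧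
      (∫ s in Set.Iic (0:ℝ), 1 / ‖τ + (s:ℂ)‖ ^ (p+1))
        ≤ K / ‖τ‖ ^ p := by
  have hπ : (0:ℝ) < Real.pi := Real.pi_pos
  have hθ2 : θ < Real.pi / 2 := by linarith
  have hcosθ : 0 < Real.cos θ := Real.cos_pos_of_mem_Ioo ⟨by linarith, hθ2⟩
  have hcos1 : Real.cos θ < 1 := by
    have h := Real.cos_lt_cos_of_nonneg_of_le_pi le_rfl (by linarith) hθ
    simpa using h
  set c : ℝ := 1 - Real.cos θ with hcdef
  have hc : 0 < c := by simp only [hcdef]; linarith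
  have hcp : (0:ℝ) < c ^ ((p+1)/2) := Real.rpow_pos_of_pos hc _
  refine ⟨Real.pi / c ^ ((p+1)/2), div_pos hπ hcp, ?_⟩
  intro r hr τ hτ
  simp only [Dminus, mem_setOf_eq] at hτ
  have hτ0 : τ ≠ 0 := by
    rintro rfl
    rw [zero_add, Complex.arg_ofReal_of_nonneg hr.le] at hτ
    simp at hτ; linarith
  set a : ℝ := ‖τ‖ with ha
  have ha0 : 0 < a := norm_pos_iff.2 hτ0
  have hxy : τ.re^2 + τ.im^2 = a^2 := by
    rw [ha, Complex.sq_norm, Complex.normSq_apply]; ring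
  -- dichotomy
  have hdich : τ.re < 0 ∨ Real.sin θ ^ 2 * (τ.re^2+τ.im^2) ≤ τ.im^2 := by
    by_cases hx : τ.re < 0
    · exact Or.inl hx
    push_neg at hx
    right
    set w : ℂ := τ + (r:ℂ) with hw
    have hwre : 0 < w.re := by
      simp only [hw, Complex.add_re, Complex.ofReal_re]; linarith
    have harg : |w.arg| < Real.pi/2 := Complex.abs_arg_lt_pi_div_two_iff.2 (Or.inl hwre)
    have hsθ : 0 ≤ Real.sin θ := Real.sin_nonneg_of_nonneg_of_le_pi hθ.le (by linarith)
    have hsin : Real.sin θ ≤ Real.sin |w.arg| :=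
      (Real.sin_lt_sin_of_lt_of_le_pi_div_two (by linarith) harg.le hτ).le
    obtain ⟨hal, hau⟩ := abs_lt.1 harg
    have habs : Real.sin |w.arg| = |Real.sin w.arg| := by
      rcases le_or_gt 0 w.arg with h | h
      · rw [_root_.abs_of_nonneg h, _root_.abs_of_nonneg
          (Real.sin_nonneg_of_nonneg_of_le_pi h (by linarith))]
      · rw [_root_.abs_of_neg h, Real.sin_neg, _root_.abs_of_nonpos
          (Real.sin_nonpos_of_nonpos_of_neg_pi_le h.le (by linarith))]
    have hw0 : w ≠ 0 := by
      intro h0; rw [h0] at hwre; simp at hwre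
    have hsinarg : |Real.sin w.arg| = |w.im| / ‖w‖ := by
      rw [Complex.sin_arg, _root_.abs_div, _root_.abs_of_nonneg (norm_nonneg w)]
    have haw : 0 < ‖w‖ := norm_pos_iff.2 hw0
    have h1 : Real.sin θ * ‖w‖ ≤ |w.im| := by
      rw [habs, hsinarg] at hsin
      calc Real.sin θ * ‖w‖ ≤ (|w.im| / ‖w‖) * ‖w‖ :=
            mul_le_mul_of_nonneg_right hsin haw.le
        _ = |w.im| := by field_simp
    have hwim : w.im = τ.im := by simp [hw]
    have hwre2 : w.re = τ.re + r := by simp [hw]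
    have h2 : (‖w‖)^2 = (τ.re + r)^2 + τ.im^2 := by
      rw [Complex.sq_norm, Complex.normSq_apply, hwim, hwre2]; ring
    have h3 : Real.sin θ^2 * ((τ.re+r)^2 + τ.im^2) ≤ τ.im^2 := by
      have hsq := mul_self_le_mul_self (mul_nonneg hsθ haw.le) h1
      rw [hwim] at hsq
      calc Real.sin θ^2 * ((τ.re+r)^2 + τ.im^2)
          = (Real.sin θ * ‖w‖) * (Real.sin θ * ‖w‖) := by
            rw [← h2]; ring
        _ ≤ |τ.im| * |τ.im| := hsq
        _ = τ.im^2 := by rw [_root_.abs_mul_abs_self]; ring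
    have h5 : (0:ℝ) ≤ 2*τ.re*r + r^2 := by nlinarith
    have h4 : (0:ℝ) ≤ Real.sin θ^2 * (2*τ.re*r + r^2) := mul_nonneg (sq_nonneg _) h5
    nlinarith [h3, h4]
  -- key pointwise squared bound
  have hkey : ∀ s : ℝ, s ≤ 0 → c * (a^2 + s^2) ≤ (‖τ + (s:ℂ)‖)^2 := by
    intro s hs
    have h1 := alg_ineq θ τ.re τ.im s hcosθ hs hdich
    have h2 : (‖τ + (s:ℂ)‖)^2 = (τ.re+s)^2 + τ.im^2 := by
      rw [Complex.sq_norm, Complex.normSq_apply]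
      simp [Complex.add_re, Complex.add_im]
      ring
    rw [h2, ← hxy, hcdef]
    linarith
  set D : ℝ := c ^ ((p+1)/2) * a ^ (p-1) with hD
  have hap : (0:ℝ) < a ^ (p-1) := Real.rpow_pos_of_pos ha0 _
  have hD0 : 0 < D := mul_pos hcp hap
  -- pointwise integrand bound
  have hbound : ∀ s ∈ Set.Iic (0:ℝ),
      1 / ‖τ + (s:ℂ)‖ ^ (p+1) ≤ D⁻¹ * (a^2+s^2)⁻¹ := by
    intro s hs
    have hb : (0:ℝ) ≤ ‖τ + (s:ℂ)‖ := norm_nonneg _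
    have has2 : (0:ℝ) < a^2 + s^2 := by positivity
    have h1 := hkey s hs
    have hpow : (c*(a^2+s^2))^((p+1)/2) ≤ ((‖τ + (s:ℂ)‖)^2)^((p+1)/2) :=
      Real.rpow_le_rpow (by positivity) h1 (by linarith)
    have e1 : ((‖τ + (s:ℂ)‖)^2)^((p+1)/2) = ‖τ + (s:ℂ)‖ ^ (p+1) := by
      rw [← Real.rpow_natCast (‖τ + (s:ℂ)‖) 2, ← Real.rpow_mul hb]
      congr 1
      push_cast
      ring
    have e2 : (c*(a^2+s^2))^((p+1)/2) = c^((p+1)/2) * (a^2+s^2)^((p+1)/2) :=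
      Real.mul_rpow hc.le has2.le
    have e3 : a^(p-1) * (a^2+s^2) ≤ (a^2+s^2)^((p+1)/2) := by
      have hsplit : (a^2+s^2)^((p+1)/2) = (a^2+s^2)^((p-1)/2) * (a^2+s^2) := by
        have h' : (p+1)/2 = (p-1)/2 + 1 := by ring
        rw [h', Real.rpow_add has2, Real.rpow_one]
      rw [hsplit]
      have h4 : a^(p-1) ≤ (a^2+s^2)^((p-1)/2) := by
        have ha2 : a^(p-1) = (a^2)^((p-1)/2) := by
          rw [← Real.rpow_natCast a 2, ← Real.rpow_mul ha0.le]
          congr 1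
          push_cast
          ring
        rw [ha2]
        exact Real.rpow_le_rpow (sq_nonneg a) (by linarith [sq_nonneg s]) (by linarith)
      exact mul_le_mul_of_nonneg_right h4 has2.le
    have h5 : D * (a^2+s^2) ≤ ‖τ + (s:ℂ)‖ ^ (p+1) := by
      calc D*(a^2+s^2) = c^((p+1)/2) * (a^(p-1) * (a^2+s^2)) := by rw [hD]; ring
        _ ≤ c^((p+1)/2) * (a^2+s^2)^((p+1)/2) := mul_le_mul_of_nonneg_left e3 hcp.le
        _ = (c*(a^2+s^2))^((p+1)/2) := e2.symm
        _ ≤ _ := by rw [← e1]; exact hpow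
    have h6 : 0 < D * (a^2+s^2) := mul_pos hD0 has2
    calc 1 / ‖τ + (s:ℂ)‖ ^ (p+1) ≤ 1 / (D*(a^2+s^2)) :=
          one_div_le_one_div_of_le h6 h5
      _ = D⁻¹ * (a^2+s^2)⁻¹ := by rw [one_div, mul_inv]
  obtain ⟨hint, hval⟩ := int_aux a ha0
  have hg_int : IntegrableOn (fun s : ℝ => D⁻¹ * (a^2+s^2)⁻¹) (Set.Iic 0) :=
    (hint.const_mul D⁻¹).integrableOn
  have habspos : ∀ s : ℝ, s ≤ 0 → 0 < ‖τ + (s:ℂ)‖ := by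
    intro s hs
    have h1 := hkey s hs
    have h2 : (0:ℝ) < c * (a^2+s^2) := mul_pos hc (by positivity)
    nlinarith [norm_nonneg (τ + (s:ℂ))]
  have hf_meas : AEStronglyMeasurable (fun s : ℝ => 1 / ‖τ + (s:ℂ)‖ ^ (p+1))
      (volume.restrict (Set.Iic 0)) := by
    apply ContinuousOn.aestronglyMeasurable _ measurableSet_Iic
    apply ContinuousOn.div continuousOn_const
    · exact ((continuous_norm.comp
        (continuous_const.add Complex.continuous_ofReal)).rpow_const
        (fun x => Or.inr (by linarith))).continuousOn
    · intro s hs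
      exact (Real.rpow_pos_of_pos (habspos s hs) _).ne'
  have hf_int : IntegrableOn (fun s : ℝ => 1 / ‖τ + (s:ℂ)‖ ^ (p+1)) (Set.Iic 0) := by
    apply Integrable.mono' hg_int hf_meas
    filter_upwards [ae_restrict_mem measurableSet_Iic] with s hs
    rw [Real.norm_eq_abs, _root_.abs_of_nonneg
      (div_nonneg zero_le_one (Real.rpow_nonneg (norm_nonneg _) _))]
    exact hbound s hs
  refine ⟨hf_int, ?_⟩
  have hmono := setIntegral_mono_on hf_int hg_int measurableSet_Iic hbound
  have heq1 : ∫ s in Set.Iic (0:ℝ), D⁻¹ * (a^2+s^2)⁻¹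
      = D⁻¹ * ∫ s in Set.Iic (0:ℝ), (a^2+s^2)⁻¹ :=
    MeasureTheory.integral_const_mul _ _
  have hle2 : ∫ s in Set.Iic (0:ℝ), (a^2+s^2)⁻¹ ≤ Real.pi / a := by
    rw [← hval]
    exact setIntegral_le_integral hint (Filter.Eventually.of_forall fun s => by positivity)
  have hfinal : D⁻¹ * (Real.pi / a) = (Real.pi / c ^ ((p+1)/2)) / a ^ p := by
    have hap1 : a^(p-1) * a = a^p := by
      nth_rewrite 2 [← Real.rpow_one a]
      rw [← Real.rpow_add ha0]
      norm_num
    calc D⁻¹ * (Real.pi / a) = Real.pi / (D * a) := by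
          rw [div_eq_mul_inv, div_eq_mul_inv, mul_inv]; ring
      _ = Real.pi / (c ^ ((p+1)/2) * a ^ p) := by rw [hD, mul_assoc, hap1]
      _ = (Real.pi / c ^ ((p+1)/2)) / a ^ p := (div_div _ _ _).symm
  calc ∫ s in Set.Iic (0:ℝ), 1 / ‖τ+(s:ℂ)‖ ^ (p+1)
      ≤ ∫ s in Set.Iic (0:ℝ), D⁻¹ * (a^2+s^2)⁻¹ := hmono
    _ = D⁻¹ * ∫ s in Set.Iic (0:ℝ), (a^2+s^2)⁻¹ := heq1
    _ ≤ D⁻¹ * (Real.pi / a) := mul_le_mul_of_nonneg_left hle2 (inv_nonneg.2 hD0.le)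
    _ = _ := hfinal
end
end

section
/- Let r > 1 and let f : 𝕋_h × D_r^− → ℂ be analytic, continuous on the closure of its domain, and suppose |f(φ,τ)| ≤ K_f/|τ|^p for some K_f > 0 and p ≥ 2. Then u⁻(φ,τ) = ∫_{−∞}^0 f(φ+s, τ+s) ds defines an analytic function on 𝕋_h × D_r^−, continuous on the closure of its domain, and |u⁻(φ,τ)| ≤ K_{p−1} K_f/|τ|^{p−1}, where K_{p−1} is a constant depending only on p and θ (independent of r). -/
noncomputable section
open Complex Set MeasureTheory Metric

def DminusCl (θ r : ℝ) : Set ℂ := {τ : ℂ | (τ + (r:ℂ)).re ≤ Real.cos θ * ‖(τ + (r:ℂ))‖}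

section Geometry

variable {θ : ℝ} (hθ : 0 < θ) (hθ4 : θ < Real.pi / 4)
include hθ hθ4

lemma hpi_aux : θ < Real.pi := by nlinarith [Real.pi_pos]

lemma cos_pos_aux : 0 < Real.cos θ :=
  Real.cos_pos_of_mem_Ioo ⟨by nlinarith [Real.pi_pos], by nlinarith [Real.pi_pos]⟩

lemma cos_lt_one_aux : Real.cos θ < 1 := by
  have h := Real.strictAntiOn_cos ⟨le_rfl, Real.pi_pos.le⟩
    ⟨hθ.le, (hpi_aux hθ hθ4).le⟩ hθ
  simpa using h

lemma sin_pos_aux : 0 < Real.sin θ := Real.sin_pos_of_pos_of_lt_pi hθ (hpi_aux hθ hθ4)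

lemma mem_Dminus_iff {r : ℝ} {τ : ℂ} :
    τ ∈ Dminus θ r ↔ (τ + (r:ℂ)).re < Real.cos θ * ‖(τ + (r:ℂ))‖ := by
  unfold Dminus
  simp only [mem_setOf_eq]
  rcases eq_or_ne (τ + (r:ℂ)) 0 with h0 | h0
  · rw [h0]
    simp only [Complex.arg_zero, abs_zero, map_zero, norm_zero, Complex.zero_re, mul_zero]
    constructor <;> intro h' <;> linarith
  · have h1 : θ < |(τ + (r:ℂ)).arg| ↔ Real.cos |(τ + (r:ℂ)).arg| < Real.cos θ :=
      (Real.strictAntiOn_cos.lt_iff_gt ⟨abs_nonneg _, Complex.abs_arg_le_pi _⟩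
        ⟨hθ.le, (hpi_aux hθ hθ4).le⟩).symm
    rw [h1, Real.cos_abs, Complex.cos_arg h0,
      div_lt_iff₀ (norm_pos_iff.2 h0)]

lemma isOpen_Dminus (r : ℝ) : IsOpen (Dminus θ r) := by
  have he : Dminus θ r = {τ : ℂ | (τ + (r:ℂ)).re < Real.cos θ * ‖(τ + (r:ℂ))‖} := by
    ext τ; exact mem_Dminus_iff hθ hθ4
  rw [he]
  exact isOpen_lt (Complex.continuous_re.comp (continuous_id.add continuous_const))
    (continuous_const.mul (continuous_norm.comp (continuous_id.add continuous_const)))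

lemma Dminus_subset_cl (r : ℝ) : Dminus θ r ⊆ DminusCl θ r := fun _ hτ =>
  le_of_lt ((mem_Dminus_iff hθ hθ4).1 hτ)

lemma shift_mem_Dminus {r : ℝ} {τ : ℂ} (hτ : τ ∈ DminusCl θ r) {s : ℝ} (hs : s < 0) :
    τ + (s:ℂ) ∈ Dminus θ r := by
  have hcospos := cos_pos_aux hθ hθ4
  have hcos1 := cos_lt_one_aux hθ hθ4
  rw [mem_Dminus_iff hθ hθ4]
  have h2 : (τ + (r:ℂ)).re ≤ Real.cos θ * ‖(τ + (r:ℂ))‖ := hτ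
  have h3 : ‖(τ + (r:ℂ))‖ ≤ ‖(τ + (s:ℂ) + (r:ℂ))‖ + (-s) := by
    have e : τ + (r:ℂ) = (τ + (s:ℂ) + (r:ℂ)) + ((-s : ℝ) : ℂ) := by push_cast; ring
    rw [e]
    refine (norm_add_le _ _).trans ?_
    rw [Complex.norm_real, Real.norm_eq_abs, _root_.abs_of_nonneg (by linarith)]
  have e2 : (τ + (s:ℂ) + (r:ℂ)).re = (τ + (r:ℂ)).re + s := by
    simp [Complex.add_re, Complex.ofReal_re]; ring
  rw [e2]
  nlinarith [mul_le_mul_of_nonneg_left h3 hcospos.le,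
    mul_lt_mul_of_neg_right hcos1 hs]

lemma shift_mem_Dminus' {r : ℝ} {τ : ℂ} (hτ : τ ∈ Dminus θ r) {s : ℝ} (hs : s ≤ 0) :
    τ + (s:ℂ) ∈ Dminus θ r := by
  rcases eq_or_lt_of_le hs with he | hlt
  · rw [he]; simpa using hτ
  · exact shift_mem_Dminus hθ hθ4 (Dminus_subset_cl hθ hθ4 r hτ) hlt

lemma closure_Dminus (r : ℝ) : closure (Dminus θ r) = DminusCl θ r := by
  apply Subset.antisymm
  · refine closure_minimal (Dminus_subset_cl hθ hθ4 r) ?_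
    exact isClosed_le (Complex.continuous_re.comp (continuous_id.add continuous_const))
      (continuous_const.mul (continuous_norm.comp (continuous_id.add continuous_const)))
  · intro τ hτ
    have ht : Filter.Tendsto (fun s : ℝ => τ + (s:ℂ)) (nhdsWithin 0 (Iio 0)) (nhds τ) := by
      have h1 : Filter.Tendsto (fun s : ℝ => τ + (s:ℂ)) (nhds 0) (nhds τ) := by
        have h2 := Complex.continuous_ofReal.tendsto 0
        simpa using tendsto_const_nhds.add h2
      exact h1.mono_left nhdsWithin_le_nhds
    refine mem_closure_of_tendsto ht ?_
    filter_upwards [self_mem_nhdsWithin] with s hs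
    exact shift_mem_Dminus hθ hθ4 hτ hs

lemma abs_lower {r : ℝ} (hr : 0 ≤ r) {τ : ℂ} (hτ : τ ∈ DminusCl θ r) :
    r * Real.sin θ ≤ ‖τ‖ := by
  have hsin := sin_pos_aux hθ hθ4
  have hA : (0:ℝ) ≤ ‖(τ + (r:ℂ))‖ := norm_nonneg _
  have hB : (0:ℝ) ≤ ‖τ‖ := norm_nonneg τ
  have hτ' : (τ + (r:ℂ)).re ≤ Real.cos θ * ‖(τ + (r:ℂ))‖ := hτ
  have h1 : ‖τ‖ ^ 2
      = ‖(τ + (r:ℂ))‖ ^ 2 - 2 * r * (τ + (r:ℂ)).re + r ^ 2 := by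
    rw [Complex.sq_norm, Complex.sq_norm, Complex.normSq_apply, Complex.normSq_apply]
    simp only [Complex.add_re, Complex.add_im, Complex.ofReal_re, Complex.ofReal_im]
    ring
  have hsc := Real.sin_sq_add_cos_sq θ
  have h2 : (r * Real.sin θ) ^ 2 ≤ ‖τ‖ ^ 2 := by
    nlinarith [sq_nonneg (‖(τ + (r:ℂ))‖ - r * Real.cos θ),
      mul_le_mul_of_nonneg_left hτ' (by linarith : (0:ℝ) ≤ 2 * r)]
  nlinarith [h2, mul_nonneg hr hsin.le, hB]

lemma key_lower {r : ℝ} (hr : 0 ≤ r) {τ : ℂ} (hτ : τ ∈ DminusCl θ r) {t : ℝ} (ht : 0 ≤ t) :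
    Real.sin θ / 4 * (‖τ‖ + t) ≤ ‖(τ - (t:ℂ))‖ := by
  have hsin := sin_pos_aux hθ hθ4
  have h1 : τ - (t:ℂ) ∈ DminusCl θ (r + t) := by
    show ((τ - (t:ℂ)) + (((r + t : ℝ)):ℂ)).re ≤
      Real.cos θ * ‖((τ - (t:ℂ)) + (((r + t : ℝ)):ℂ))‖
    have e : (τ - (t:ℂ)) + (((r + t : ℝ)):ℂ) = τ + (r:ℂ) := by push_cast; ring
    rw [e]; exact hτ
  have h2 : (r + t) * Real.sin θ ≤ ‖(τ - (t:ℂ))‖ :=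
    abs_lower hθ hθ4 (by linarith) h1
  have h3 : ‖τ‖ - t ≤ ‖(τ - (t:ℂ))‖ := by
    have h4 := norm_sub_norm_le τ ((t:ℝ):ℂ)
    simpa [Complex.norm_real, Real.norm_eq_abs, _root_.abs_of_nonneg ht] using h4
  have hsle : Real.sin θ ≤ 1 := Real.sin_le_one θ
  have hBn : (0:ℝ) ≤ ‖τ‖ := norm_nonneg τ
  rcases le_or_gt t (‖τ‖ / 2) with hcase | hcase
  · nlinarith [mul_le_mul_of_nonneg_right hsle (by linarith : (0:ℝ) ≤ ‖τ‖ + t)]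
  · nlinarith [mul_lt_mul_of_pos_left hcase hsin, mul_nonneg hr hsin.le]

end Geometry

section OneVar

lemma cps_smul (g : ℂ → ℂ) (c : ℂ) (R : ℝ) (n : ℕ) (y : ℂ) :
    (cauchyPowerSeries g c R n fun _ => y) = y ^ n * (cauchyPowerSeries g c R n fun _ => 1) := by
  have e : (fun _ : Fin n => y) = fun _ : Fin n => y • (1:ℂ) := by funext; simp
  rw [e, ContinuousMultilinearMap.map_smul_univ]
  simp [smul_eq_mul, Finset.prod_const]

lemma hasSum_cauchy {g : ℂ → ℂ} {c : ℂ} {R : ℝ} (hR : 0 < R)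
    (hd : ∀ b ∈ closedBall c R, DifferentiableAt ℂ g b) {y : ℂ} (hy : ‖y‖ < R) :
    HasSum (fun n => y ^ n * (cauchyPowerSeries g c R n fun _ => 1)) (g (c + y)) := by
  have hdo : DifferentiableOn ℂ g (closedBall c R) := fun b hb => (hd b hb).differentiableWithinAt
  have hdc : DiffContOnCl ℂ g (ball c R) :=
    ⟨hdo.mono ball_subset_closedBall, by
      rw [closure_ball c hR.ne']
      exact hdo.continuousOn⟩
  set RR : NNReal := ⟨R, hR.le⟩ with hRR
  have hball := hdc.hasFPowerSeriesOnBall (R := RR) (by exact_mod_cast hR)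
  have hmem : y ∈ Metric.eball (0:ℂ) ((RR : NNReal) : ENNReal) := by
    rw [mem_eball_zero_iff]
    exact_mod_cast (show ‖y‖ < R by exact hy)
  have hs := hball.hasSum hmem
  have hs' : HasSum (fun n => (cauchyPowerSeries g c R n) fun _ => y) (g (c + y)) := hs
  have e2 : (fun n => (cauchyPowerSeries g c R n) fun _ => y)
      = fun n => y ^ n * (cauchyPowerSeries g c R n fun _ => 1) := by
    funext n; exact cps_smul g c R n y
  rw [e2] at hs'
  exact hs'

lemma norm_cauchy_coeff_le {g : ℂ → ℂ} {c : ℂ} {R M : ℝ} (hR : 0 < R)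
    (hcont : ContinuousOn g (sphere c R)) (hg : ∀ b ∈ sphere c R, ‖g b‖ ≤ M) (n : ℕ) :
    ‖(cauchyPowerSeries g c R n fun _ => 1)‖ ≤ M / R ^ n := by
  have h1 : ‖(cauchyPowerSeries g c R n fun _ => 1)‖ ≤ ‖cauchyPowerSeries g c R n‖ := by
    have h2 := (cauchyPowerSeries g c R n).le_opNorm (fun _ => 1)
    simpa using h2
  refine h1.trans ?_
  refine (norm_cauchyPowerSeries_le g c R n).trans ?_
  have hM0 : 0 ≤ M := le_trans (norm_nonneg _) (hg _ (circleMap_mem_sphere c hR.le 0))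
  have hcc : Continuous fun t : ℝ => ‖g (circleMap c R t)‖ :=
    (hcont.comp_continuous (continuous_circleMap c R)
      (fun t => circleMap_mem_sphere c hR.le t)).norm
  have hint2 : ∫ t in (0:ℝ)..2 * Real.pi, ‖g (circleMap c R t)‖ ≤ 2 * Real.pi * M := by
    have hint : ∫ t in (0:ℝ)..2 * Real.pi, ‖g (circleMap c R t)‖
        ≤ ∫ _ in (0:ℝ)..2 * Real.pi, M := by
      apply intervalIntegral.integral_mono_on (by positivity)
        (hcc.intervalIntegrable _ _) (intervalIntegrable_const)
      intro t _
      exact hg _ (circleMap_mem_sphere c hR.le t)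
    refine hint.trans_eq ?_
    simp [intervalIntegral.integral_const]
  calc ((2 * Real.pi)⁻¹ * ∫ t in (0:ℝ)..2 * Real.pi, ‖g (circleMap c R t)‖) * |R|⁻¹ ^ n
      ≤ ((2 * Real.pi)⁻¹ * (2 * Real.pi * M)) * |R|⁻¹ ^ n := by
        have hp1 : (0:ℝ) ≤ (2 * Real.pi)⁻¹ := by positivity
        have hp2 : (0:ℝ) ≤ |R|⁻¹ ^ n := by positivity
        gcongr
    _ = M / R ^ n := by
        rw [_root_.abs_of_pos hR, inv_pow]
        rw [inv_mul_cancel_left₀ (by positivity : (2*Real.pi) ≠ 0)]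
        rw [div_eq_mul_inv]

end OneVar

section Monomials

def mono (n k : ℕ) : ContinuousMultilinearMap ℂ (fun _ : Fin n => ℂ × ℂ) ℂ :=
  (ContinuousMultilinearMap.mkPiAlgebra ℂ (Fin n) ℂ).compContinuousLinearMap
    fun i => if (i : ℕ) < k then ContinuousLinearMap.fst ℂ ℂ ℂ else ContinuousLinearMap.snd ℂ ℂ ℂ

lemma mono_apply (n k : ℕ) (hk : k ≤ n) (v : ℂ × ℂ) :
    (mono n k fun _ => v) = v.1 ^ k * v.2 ^ (n - k) := by
  unfold mono
  rw [ContinuousMultilinearMap.compContinuousLinearMap_apply,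
    ContinuousMultilinearMap.mkPiAlgebra_apply]
  have e : ∀ i : Fin n,
      (if (i:ℕ) < k then ContinuousLinearMap.fst ℂ ℂ ℂ else ContinuousLinearMap.snd ℂ ℂ ℂ) v
      = if (i:ℕ) < k then v.1 else v.2 := by
    intro i; by_cases hik : (i:ℕ) < k <;> simp [hik]
  rw [Finset.prod_congr rfl (fun i _ => e i)]
  rw [Fin.prod_univ_eq_prod_range (fun i => if i < k then v.1 else v.2) n]
  have hsplit := Finset.prod_range_add (fun i => if i < k then v.1 else v.2) k (n - k)
  rw [show k + (n - k) = n by omega] at hsplit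
  rw [hsplit]
  congr 1
  · rw [Finset.prod_congr rfl (fun i hi => if_pos (Finset.mem_range.1 hi))]
    simp
  · rw [Finset.prod_congr rfl (fun i _ => if_neg (by omega))]
    simp

lemma norm_mono_le (n k : ℕ) : ‖mono n k‖ ≤ 1 := by
  unfold mono
  refine (ContinuousMultilinearMap.norm_compContinuousLinearMap_le _ _).trans ?_
  have h1 : ‖ContinuousMultilinearMap.mkPiAlgebra ℂ (Fin n) ℂ‖ ≤ 1 := by
    rcases Nat.eq_zero_or_pos n with hn | hn
    · subst hn
      rw [ContinuousMultilinearMap.norm_mkPiAlgebra_of_empty]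
      simp
    · haveI : Nonempty (Fin n) := Fin.pos_iff_nonempty.1 hn
      exact ContinuousMultilinearMap.norm_mkPiAlgebra_le
  have h2 : ∀ i : Fin n,
      ‖(if (i:ℕ) < k then ContinuousLinearMap.fst ℂ ℂ ℂ else ContinuousLinearMap.snd ℂ ℂ ℂ)‖ ≤ 1 := by
    intro i
    by_cases hik : (i:ℕ) < k <;> simp only [hik, if_true, if_false]
    · exact ContinuousLinearMap.opNorm_le_bound _ zero_le_one
        (fun x => by simpa using norm_fst_le x)
    · exact ContinuousLinearMap.opNorm_le_bound _ zero_le_one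
        (fun x => by simpa using norm_snd_le x)
  have h3 : ∏ i : Fin n,
      ‖(if (i:ℕ) < k then ContinuousLinearMap.fst ℂ ℂ ℂ else ContinuousLinearMap.snd ℂ ℂ ℂ)‖ ≤ 1 :=
    Finset.prod_le_one (fun i _ => norm_nonneg _) (fun i _ => h2 i)
  calc ‖ContinuousMultilinearMap.mkPiAlgebra ℂ (Fin n) ℂ‖ * _ ≤ 1 * 1 :=
        mul_le_mul h1 h3 (Finset.prod_nonneg fun i _ => norm_nonneg _) zero_le_one
    _ = 1 := one_mul 1

end Monomials

section Shift

lemma sub_emb (B : ℝ) : MeasurableEmbedding (fun x : ℝ => B - x) :=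
  (Homeomorph.subLeft B).isClosedEmbedding.measurableEmbedding

lemma sub_mp (B : ℝ) : MeasurePreserving (fun x : ℝ => B - x) volume volume := by
  have h1 := (Measure.measurePreserving_neg (volume : Measure ℝ))
  have h2 := measurePreserving_add_left (volume : Measure ℝ) B
  have h3 := h2.comp h1
  simpa [Function.comp_def, sub_eq_add_neg] using h3

lemma sub_preimage (B : ℝ) : (fun x : ℝ => B - x) ⁻¹' (Ioi B) = Iio 0 := by
  ext x; simp only [mem_preimage, mem_Ioi, mem_Iio]
  constructor <;> intro hx <;> linarith

lemma integral_Iic_comp_sub (g : ℝ → ℝ) (B : ℝ) :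
    (∫ s in Iic (0:ℝ), g (B - s)) = ∫ t in Ioi B, g t := by
  have h := (sub_mp B).setIntegral_preimage_emb (sub_emb B) g (Ioi B)
  rw [sub_preimage B] at h
  rw [← h]
  apply setIntegral_congr_set
  exact Iio_ae_eq_Iic.symm

lemma integrableOn_Iic_comp_sub {g : ℝ → ℝ} {B : ℝ} (hg : IntegrableOn g (Ioi B)) :
    IntegrableOn (fun s => g (B - s)) (Iic (0:ℝ)) := by
  have h := ((sub_mp B).integrableOn_comp_preimage (sub_emb B)).2 hg
  rw [sub_preimage B] at h
  rwa [integrableOn_Iic_iff_integrableOn_Iio]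

lemma decay_eq {c B p : ℝ} (hc : 0 < c) (hB : 0 < B) (Kf : ℝ) :
    ∀ s ∈ Iic (0:ℝ), Kf / (c * (B - s)) ^ p = Kf * c⁻¹ ^ p * (B - s) ^ (-p) := by
  intro s hs
  have hBs : (0:ℝ) < B - s := by simp only [mem_Iic] at hs; linarith
  rw [Real.mul_rpow hc.le hBs.le, Real.rpow_neg hBs.le, Real.inv_rpow hc.le]
  have hc1 : c ^ p ≠ 0 := (Real.rpow_pos_of_pos hc p).ne'
  have hc2 : (B - s) ^ p ≠ 0 := (Real.rpow_pos_of_pos hBs p).ne'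
  field_simp

lemma integrable_decay {c B p : ℝ} (hc : 0 < c) (hB : 0 < B) (hp : 2 ≤ p) (Kf : ℝ) :
    IntegrableOn (fun s : ℝ => Kf / (c * (B - s)) ^ p) (Iic (0:ℝ)) := by
  have h0 : IntegrableOn (fun t : ℝ => t ^ (-p)) (Ioi B) :=
    integrableOn_Ioi_rpow_of_lt (by linarith) hB
  have h1 : IntegrableOn (fun t : ℝ => Kf * c⁻¹ ^ p * t ^ (-p)) (Ioi B) := h0.const_mul _
  have h2 := integrableOn_Iic_comp_sub (g := fun t => Kf * c⁻¹ ^ p * t ^ (-p)) h1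
  exact h2.congr_fun (fun s hs => (decay_eq hc hB Kf s hs).symm) measurableSet_Iic

lemma integral_decay {c B p : ℝ} (hc : 0 < c) (hB : 0 < B) (hp : 2 ≤ p) (Kf : ℝ) :
    (∫ s in Iic (0:ℝ), Kf / (c * (B - s)) ^ p) = Kf * (c⁻¹ ^ p / (p - 1)) * B ^ (1 - p) := by
  rw [setIntegral_congr_fun measurableSet_Iic (decay_eq hc hB Kf)]
  rw [show (fun s : ℝ => Kf * c⁻¹ ^ p * (B - s) ^ (-p))
      = fun s : ℝ => (fun t : ℝ => Kf * c⁻¹ ^ p * t ^ (-p)) (B - s) from rfl]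
  rw [integral_Iic_comp_sub (fun t : ℝ => Kf * c⁻¹ ^ p * t ^ (-p)) B]
  rw [MeasureTheory.integral_const_mul]
  rw [integral_Ioi_rpow_of_lt (by linarith : -p < -1) hB]
  rw [show -p + 1 = 1 - p by ring]
  have hpn : p - 1 ≠ 0 := by intro h'; rw [sub_eq_zero] at h'; linarith [h'.symm]
  have h1p : (1 - p) ≠ 0 := by intro h'; apply hpn; linarith
  have e : -B ^ (1 - p) / (1 - p) = B ^ (1 - p) / (p - 1) := by
    rw [div_eq_div_iff h1p hpn]; ring
  rw [e]; ring
end Shift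

section TwoVar

def ccoef (F : ℂ → ℂ → ℂ) (b₀ : ℂ) (R : ℝ) (j : ℕ) (a : ℂ) : ℂ :=
  cauchyPowerSeries (F a) b₀ R j fun _ => 1

def dcoef (F : ℂ → ℂ → ℂ) (a₀ b₀ : ℂ) (R : ℝ) (k j : ℕ) : ℂ :=
  cauchyPowerSeries (ccoef F b₀ R j) a₀ R k fun _ => 1

lemma ccoef_eq (F : ℂ → ℂ → ℂ) (b₀ : ℂ) (R : ℝ) (j : ℕ) (a : ℂ) :
    ccoef F b₀ R j a = (2 * Real.pi * I)⁻¹ * ∫ t in (0:ℝ)..2 * Real.pi,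
      circleMap 0 R t * I * ((circleMap 0 R t)⁻¹ ^ j *
        ((circleMap 0 R t)⁻¹ * F a (b₀ + circleMap 0 R t))) := by
  have e : ∀ t : ℝ, b₀ + circleMap 0 R t = circleMap b₀ R t := fun t => by simp [circleMap]
  unfold ccoef
  simp only [cauchyPowerSeries, ContinuousMultilinearMap.mkPiRing_apply, Fin.prod_const,
    one_pow, one_smul, one_mul, circleIntegral, deriv_circleMap, circleMap_sub_center, smul_eq_mul, e]

lemma hasDerivAt_ccoef (F F₁ : ℂ → ℂ → ℂ) (b₀ : ℂ) {R ε : ℝ} (hR : 0 < R) (hε : 0 < ε)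
    (j : ℕ) (a₀' : ℂ)
    (h1 : ∀ a ∈ ball a₀' ε, ∀ b ∈ sphere b₀ R, HasDerivAt (fun z => F z b) (F₁ a b) a)
    (hFc : ∀ a ∈ ball a₀' ε, Continuous fun t : ℝ => F a (circleMap b₀ R t))
    (hF₁c : Continuous fun t : ℝ => F₁ a₀' (circleMap b₀ R t))
    {C : ℝ} (hC : ∀ (t : ℝ), ∀ a ∈ ball a₀' ε, ‖F₁ a (circleMap b₀ R t)‖ ≤ C) :
    HasDerivAt (ccoef F b₀ R j) (ccoef F₁ b₀ R j a₀') a₀' := by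
  have hC0 : 0 ≤ C := le_trans (norm_nonneg _) (hC 0 a₀' (mem_ball_self hε))
  have hne : ∀ t : ℝ, circleMap 0 R t ≠ 0 := fun t => circleMap_ne_center hR.ne'
  set G : ℂ → ℝ → ℂ := fun a t => circleMap 0 R t * I * ((circleMap 0 R t)⁻¹ ^ j *
      ((circleMap 0 R t)⁻¹ * F a (circleMap b₀ R t))) with hG
  set G' : ℂ → ℝ → ℂ := fun a t => circleMap 0 R t * I * ((circleMap 0 R t)⁻¹ ^ j *
      ((circleMap 0 R t)⁻¹ * F₁ a (circleMap b₀ R t))) with hG'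
  have hcont : ∀ (H : ℂ → ℂ → ℂ) a, (Continuous fun t : ℝ => H a (circleMap b₀ R t)) →
      Continuous fun t => circleMap 0 R t * I * ((circleMap 0 R t)⁻¹ ^ j *
        ((circleMap 0 R t)⁻¹ * H a (circleMap b₀ R t))) := by
    intro H a hH
    exact ((continuous_circleMap 0 R).mul continuous_const).mul
      ((((continuous_circleMap 0 R).inv₀ hne).pow j).mul
        (((continuous_circleMap 0 R).inv₀ hne).mul hH))
  have hGnorm : ∀ a t, ‖G' a t‖ = R * (R⁻¹ ^ j * (R⁻¹ * ‖F₁ a (circleMap b₀ R t)‖)) := by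
    intro a t
    simp only [hG', norm_mul, norm_pow, norm_inv, norm_circleMap_zero,
      Complex.norm_I, _root_.abs_of_pos hR, mul_one]
  have key := (intervalIntegral.hasDerivAt_integral_of_dominated_loc_of_deriv_le
    (F := G) (F' := G') (x₀ := a₀') (a := (0:ℝ)) (b := 2 * Real.pi)
    (bound := fun _ => R * (R⁻¹ ^ j * (R⁻¹ * C))) (μ := volume) (ball_mem_nhds a₀' hε)
    (by filter_upwards [ball_mem_nhds a₀' hε] with a ha
        exact (hcont F a (hFc a ha)).aestronglyMeasurable)
    ((hcont F a₀' (hFc a₀' (mem_ball_self hε))).intervalIntegrable _ _)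
    (hcont F₁ a₀' hF₁c).aestronglyMeasurable
    (by apply MeasureTheory.ae_of_all
        intro t _ a ha
        have h9 : (0:ℝ) ≤ R⁻¹ := by positivity
        exact (hGnorm a t).trans_le (mul_le_mul_of_nonneg_left
          (mul_le_mul_of_nonneg_left (mul_le_mul_of_nonneg_left (hC t a ha) h9)
            (pow_nonneg h9 j)) hR.le))
    (intervalIntegrable_const)
    (by apply MeasureTheory.ae_of_all
        intro t _ a ha
        exact (((h1 a ha (circleMap b₀ R t) (circleMap_mem_sphere b₀ hR.le t)).const_mul
          _).const_mul _).const_mul _)).2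
  have hfin := key.const_mul ((2 * Real.pi * I : ℂ)⁻¹)
  have e : ∀ t : ℝ, b₀ + circleMap 0 R t = circleMap b₀ R t := fun t => by simp [circleMap]
  have e1 : (fun a => (2 * Real.pi * I : ℂ)⁻¹ * ∫ t in (0:ℝ)..2 * Real.pi, G a t)
      = ccoef F b₀ R j := by
    funext a; rw [ccoef_eq]; simp only [e]; rfl
  have e2 : (2 * Real.pi * I : ℂ)⁻¹ * ∫ t in (0:ℝ)..2 * Real.pi, G' a₀' t
      = ccoef F₁ b₀ R j a₀' := by
    rw [ccoef_eq]; simp only [e]; rfl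
  rw [e1, e2] at hfin
  exact hfin

lemma doubleSeries (F F₁ : ℂ → ℂ → ℂ) (a₀ b₀ : ℂ) (R M : ℝ) (hR : 0 < R)
    (h1 : ∀ a ∈ closedBall a₀ (2 * R), ∀ b ∈ closedBall b₀ (2 * R),
      HasDerivAt (fun z => F z b) (F₁ a b) a)
    (h2 : ∀ a ∈ closedBall a₀ (2 * R), ∀ b ∈ closedBall b₀ (2 * R),
      DifferentiableAt ℂ (F a) b)
    (hc : ContinuousOn (fun q : ℂ × ℂ => F q.1 q.2)
      (closedBall a₀ (2 * R) ×ˢ closedBall b₀ (2 * R)))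
    (hc1 : ContinuousOn (fun q : ℂ × ℂ => F₁ q.1 q.2)
      (closedBall a₀ (2 * R) ×ˢ closedBall b₀ (2 * R)))
    (hM : ∀ a ∈ closedBall a₀ (2 * R), ∀ b ∈ closedBall b₀ (2 * R), ‖F a b‖ ≤ M) :
    (∀ k j, ‖dcoef F a₀ b₀ R k j‖ ≤ M / R ^ (k + j)) ∧
    ∀ x y : ℂ, ‖x‖ < R → ‖y‖ < R →
      HasSum (fun kj : ℕ × ℕ => dcoef F a₀ b₀ R kj.1 kj.2 * x ^ kj.1 * y ^ kj.2)
        (F (a₀ + x) (b₀ + y)) := by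
  have hR2 : 0 < 2 * R := by linarith
  have hsub1 : sphere b₀ R ⊆ closedBall b₀ (2 * R) :=
    sphere_subset_closedBall.trans (closedBall_subset_closedBall (by linarith))
  have hsubcb : closedBall b₀ R ⊆ closedBall b₀ (2 * R) :=
    closedBall_subset_closedBall (by linarith)
  have hsuba : closedBall a₀ R ⊆ closedBall a₀ (2 * R) :=
    closedBall_subset_closedBall (by linarith)
  obtain ⟨C, hCb⟩ : ∃ C, ∀ q ∈ closedBall a₀ (2 * R) ×ˢ closedBall b₀ (2 * R), ‖F₁ q.1 q.2‖ ≤ C :=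
    ((isCompact_closedBall a₀ (2 * R)).prod
      (isCompact_closedBall b₀ (2 * R))).exists_bound_of_continuousOn hc1
  have hder : ∀ j, ∀ a' ∈ closedBall a₀ R, HasDerivAt (ccoef F b₀ R j) (ccoef F₁ b₀ R j a') a' := by
    intro j a' ha'
    have hball : ball a' R ⊆ closedBall a₀ (2 * R) := by
      intro a ha
      rw [mem_closedBall]
      have h5 := mem_closedBall.1 ha'
      have h6 := (mem_ball.1 ha).le
      calc dist a a₀ ≤ dist a a' + dist a' a₀ := dist_triangle _ _ _
        _ ≤ 2 * R := by linarith
    refine hasDerivAt_ccoef F F₁ b₀ hR hR j a' ?_ ?_ ?_ (C := C) ?_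
    · intro a ha b hb; exact h1 a (hball ha) b (hsub1 hb)
    · intro a ha
      exact hc.comp_continuous (continuous_const.prodMk (continuous_circleMap b₀ R))
        (fun t => ⟨hball ha, hsub1 (circleMap_mem_sphere b₀ hR.le t)⟩)
    · exact hc1.comp_continuous (continuous_const.prodMk (continuous_circleMap b₀ R))
        (fun t => ⟨hsuba ha', hsub1 (circleMap_mem_sphere b₀ hR.le t)⟩)
    · intro t a ha
      exact hCb (a, circleMap b₀ R t) ⟨hball ha, hsub1 (circleMap_mem_sphere b₀ hR.le t)⟩
  have hM0 : 0 ≤ M :=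
    le_trans (norm_nonneg _) (hM a₀ (mem_closedBall_self hR2.le) b₀ (mem_closedBall_self hR2.le))
  have hccont : ∀ j, ContinuousOn (ccoef F b₀ R j) (sphere a₀ R) := by
    intro j a' ha'
    exact ((hder j a' (sphere_subset_closedBall ha')).differentiableAt.continuousAt).continuousWithinAt
  have hcbound : ∀ j, ∀ a' ∈ sphere a₀ R, ‖ccoef F b₀ R j a'‖ ≤ M / R ^ j := by
    intro j a' ha'
    have ha2 : a' ∈ closedBall a₀ (2 * R) := hsuba (sphere_subset_closedBall ha')
    refine norm_cauchy_coeff_le hR ?_ (fun b hb => hM a' ha2 b (hsub1 hb)) j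
    exact hc.comp (continuous_const.prodMk continuous_id).continuousOn
      (fun b hb => ⟨ha2, hsub1 hb⟩)
  have part1 : ∀ k j, ‖dcoef F a₀ b₀ R k j‖ ≤ M / R ^ (k + j) := by
    intro k j
    have h7 := norm_cauchy_coeff_le hR (hccont j) (hcbound j) k
    refine h7.trans_eq ?_
    rw [div_div, ← pow_add, add_comm j k]
  refine ⟨part1, ?_⟩
  intro x y hx hy
  have hxa : a₀ + x ∈ closedBall a₀ (2 * R) := by
    rw [mem_closedBall, dist_eq_norm]
    simp only [add_sub_cancel_left]
    linarith
  have hk : ∀ j, HasSum (fun k => x ^ k * dcoef F a₀ b₀ R k j) (ccoef F b₀ R j (a₀ + x)) :=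
    fun j => hasSum_cauchy hR (fun a' ha' => (hder j a' ha').differentiableAt) hx
  have hj : HasSum (fun j => y ^ j * ccoef F b₀ R j (a₀ + x)) (F (a₀ + x) (b₀ + y)) :=
    hasSum_cauchy hR (fun b hb => h2 _ hxa b (hsubcb hb)) hy
  have hq0x : 0 ≤ ‖x‖ / R := by positivity
  have hq1x : ‖x‖ / R < 1 := (div_lt_one hR).2 hx
  have hq0y : 0 ≤ ‖y‖ / R := by positivity
  have hq1y : ‖y‖ / R < 1 := (div_lt_one hR).2 hy
  have hsm : Summable (fun jk : ℕ × ℕ => (x ^ jk.2 * dcoef F a₀ b₀ R jk.2 jk.1) * y ^ jk.1) := by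
    apply Summable.of_norm_bounded
      (g := fun jk : ℕ × ℕ => (M * (‖y‖ / R) ^ jk.1) * (‖x‖ / R) ^ jk.2)
    · exact Summable.mul_of_nonneg
        ((summable_geometric_of_lt_one hq0y hq1y).mul_left M)
        (summable_geometric_of_lt_one hq0x hq1x)
        (fun j => mul_nonneg hM0 (pow_nonneg hq0y j))
        (fun k => pow_nonneg hq0x k)
    · rintro ⟨j, k⟩
      have hb := part1 k j
      calc ‖x ^ k * dcoef F a₀ b₀ R k j * y ^ j‖
          = ‖x‖ ^ k * ‖dcoef F a₀ b₀ R k j‖ * ‖y‖ ^ j := by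
            simp only [norm_mul, norm_pow]
        _ ≤ ‖x‖ ^ k * (M / R ^ (k + j)) * ‖y‖ ^ j := by
            gcongr
        _ = M * (‖y‖ / R) ^ j * (‖x‖ / R) ^ k := by
            rw [pow_add, div_pow, div_pow]
            have hRk : (R:ℝ) ^ k ≠ 0 := by positivity
            have hRj : (R:ℝ) ^ j ≠ 0 := by positivity
            field_simp
  have hfib : ∀ j, HasSum (fun k => (x ^ k * dcoef F a₀ b₀ R k j) * y ^ j)
      (ccoef F b₀ R j (a₀ + x) * y ^ j) := fun j => (hk j).mul_right _
  have houter := hsm.hasSum.prod_fiberwise hfib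
  have hj2 : HasSum (fun j => ccoef F b₀ R j (a₀ + x) * y ^ j) (F (a₀ + x) (b₀ + y)) := by
    have e : (fun j => ccoef F b₀ R j (a₀ + x) * y ^ j)
        = fun j => y ^ j * ccoef F b₀ R j (a₀ + x) := by
      funext j; ring
    rw [e]; exact hj
  have hTeq := houter.unique hj2
  have hT2 := hTeq ▸ hsm.hasSum
  have efun : (fun kj : ℕ × ℕ => dcoef F a₀ b₀ R kj.1 kj.2 * x ^ kj.1 * y ^ kj.2)
      = (fun jk : ℕ × ℕ => (x ^ jk.2 * dcoef F a₀ b₀ R jk.2 jk.1) * y ^ jk.1)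
        ∘ (Equiv.prodComm ℕ ℕ) := by
    funext kj
    simp only [Function.comp_apply, Equiv.prodComm_apply, Prod.fst_swap, Prod.snd_swap]
    ring
  rw [efun]
  exact (Equiv.hasSum_iff (Equiv.prodComm ℕ ℕ)).2 hT2

end TwoVar


lemma dcoef_eq (F : ℂ → ℂ → ℂ) (a₀ b₀ : ℂ) (R : ℝ) (k j : ℕ) :
    dcoef F a₀ b₀ R k j = (2 * Real.pi * I)⁻¹ * ∫ t in (0:ℝ)..2 * Real.pi,
      circleMap 0 R t * I * ((circleMap 0 R t)⁻¹ ^ k *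
        ((circleMap 0 R t)⁻¹ * ccoef F b₀ R j (a₀ + circleMap 0 R t))) := by
  have h := ccoef_eq (fun _ b => ccoef F b₀ R j b) a₀ R k 0
  exact h

set_option maxHeartbeats 2000000 in
theorem statement16 (h θ : ℝ) (hh : 0 < h) (hθ : 0 < θ) (hθ4 : θ < Real.pi / 4)
    (p : ℝ) (hp : 2 ≤ p) :
    ∃ K > (0:ℝ), ∀ r : ℝ, 1 < r → ∀ (f : ℂ → ℂ → ℂ) (Kf : ℝ), 0 < Kf →
      (∀ φ τ, f (φ + 2 * Real.pi) τ = f φ τ) →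
      AnalyticOnNhd ℂ (fun q : ℂ × ℂ => f q.1 q.2) (Strip h ×ˢ Dminus θ r) →
      ContinuousOn (fun q : ℂ × ℂ => f q.1 q.2) (closure (Strip h ×ˢ Dminus θ r)) →
      (∀ φ ∈ Strip h, ∀ τ ∈ Dminus θ r, ‖f φ τ‖ ≤ Kf / ‖τ‖ ^ p) →
      ∃ u : ℂ → ℂ → ℂ,
        (∀ φ ∈ Strip h, ∀ τ ∈ Dminus θ r,
          u φ τ = ∫ s in Set.Iic (0:ℝ), f (φ + (s:ℂ)) (τ + (s:ℂ))) ∧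
        (∀ φ τ, u (φ + 2 * Real.pi) τ = u φ τ) ∧
        AnalyticOnNhd ℂ (fun q : ℂ × ℂ => u q.1 q.2) (Strip h ×ˢ Dminus θ r) ∧
        ContinuousOn (fun q : ℂ × ℂ => u q.1 q.2) (closure (Strip h ×ˢ Dminus θ r)) ∧
        ∀ φ ∈ Strip h, ∀ τ ∈ Dminus θ r,
          ‖u φ τ‖ ≤ K * Kf / ‖τ‖ ^ (p - 1) := by
  have hsin : 0 < Real.sin θ := sin_pos_aux hθ hθ4
  set c : ℝ := Real.sin θ / 4 with hcdef
  have hc : 0 < c := by positivity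
  refine ⟨(4 / Real.sin θ) ^ p / (p - 1),
    div_pos (Real.rpow_pos_of_pos (by positivity) p) (by linarith), ?_⟩
  intro r hr f Kf hKf hper hfa hfc hfb
  set S := Strip h ×ˢ Dminus θ r with hSdef
  have hSopen : IsOpen S := by
    apply IsOpen.prod
    · exact isOpen_lt (_root_.continuous_abs.comp Complex.continuous_im) continuous_const
    · exact isOpen_Dminus hθ hθ4 r
  have hclS : closure S = closure (Strip h) ×ˢ DminusCl θ r := by
    rw [hSdef, closure_prod_eq, closure_Dminus hθ hθ4 r]
  have hclDsub : ∀ τ ∈ DminusCl θ r, ∀ s : ℝ, s ≤ 0 → τ + (s:ℂ) ∈ DminusCl θ r := by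
    intro τ hτ s hs
    rcases eq_or_lt_of_le hs with he | hlt
    · rw [he]; simpa using hτ
    · exact Dminus_subset_cl hθ hθ4 r (shift_mem_Dminus hθ hθ4 hτ hlt)
  have hcl_shift : ∀ q ∈ closure S, ∀ s : ℝ, s ≤ 0 →
      ((q.1 + (s:ℂ), q.2 + (s:ℂ)) : ℂ × ℂ) ∈ closure S := by
    intro q hq s hs
    rw [hclS] at hq ⊢
    refine ⟨?_, hclDsub q.2 hq.2 s hs⟩
    have hmt : MapsTo (fun z : ℂ => z + (s:ℂ)) (Strip h) (Strip h) := by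
      intro z hz
      show |(z + (s:ℂ)).im| < h
      simpa [Strip, Complex.add_im, Complex.ofReal_im] using hz
    show q.1 + (s:ℂ) ∈ closure (Strip h)
    exact map_mem_closure (f := fun z : ℂ => z + (s:ℂ))
      (continuous_id.add continuous_const) hq.1 hmt
  have habs : ∀ τ ∈ DminusCl θ r, Real.sin θ ≤ ‖τ‖ := by
    intro τ hτ
    have h1 := abs_lower hθ hθ4 (by linarith : (0:ℝ) ≤ r) hτ
    nlinarith
  have hfb' : ∀ q ∈ closure S, ‖f q.1 q.2‖ ≤ Kf / ‖q.2‖ ^ p := by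
    intro q hq
    haveI hne : (nhdsWithin q S).NeBot := mem_closure_iff_nhdsWithin_neBot.1 hq
    have h1 : Filter.Tendsto (fun q' : ℂ × ℂ => ‖f q'.1 q'.2‖) (nhdsWithin q S)
        (nhds ‖f q.1 q.2‖) :=
      (continuous_norm.tendsto _).comp
        ((hfc q hq).tendsto.mono_left (nhdsWithin_mono q subset_closure))
    have habsq : 0 < ‖q.2‖ := by
      have := habs q.2 (by rw [hclS] at hq; exact hq.2)
      linarith
    have h2 : Filter.Tendsto (fun q' : ℂ × ℂ => Kf / ‖q'.2‖ ^ p) (nhdsWithin q S)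
        (nhds (Kf / ‖q.2‖ ^ p)) := by
      apply Filter.Tendsto.mono_left _ nhdsWithin_le_nhds
      have h3 : ContinuousAt (fun q' : ℂ × ℂ => ‖q'.2‖) q :=
        (continuous_norm.comp continuous_snd).continuousAt
      have h4 : ContinuousAt (fun x : ℝ => x ^ p) (‖q.2‖) :=
        Real.continuousAt_rpow_const _ _ (Or.inl habsq.ne')
      have h5 : ContinuousAt ((fun x : ℝ => x ^ p) ∘ (fun q' : ℂ × ℂ => ‖q'.2‖)) q :=
        ContinuousAt.comp h4 h3
      have h5' : ContinuousAt (fun q' : ℂ × ℂ => ‖q'.2‖ ^ p) q := h5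
      exact (continuousAt_const.div h5' (Real.rpow_pos_of_pos habsq p).ne')
    refine le_of_tendsto_of_tendsto h1 h2 ?_
    filter_upwards [self_mem_nhdsWithin] with q' hq'
    exact hfb q'.1 hq'.1 q'.2 hq'.2
  have hmeas : ∀ q ∈ closure S, AEStronglyMeasurable (fun s : ℝ => f (q.1 + (s:ℂ)) (q.2 + (s:ℂ)))
      (volume.restrict (Iic 0)) := by
    intro q hq
    apply ContinuousOn.aestronglyMeasurable _ measurableSet_Iic
    intro s hs
    have h1 : ContinuousWithinAt (fun s : ℝ => ((q.1 + (s:ℂ), q.2 + (s:ℂ)) : ℂ × ℂ)) (Iic 0) s :=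
      (Continuous.continuousWithinAt (by continuity))
    have h2 : ContinuousWithinAt ((fun q' : ℂ × ℂ => f q'.1 q'.2) ∘
        (fun s : ℝ => ((q.1 + (s:ℂ), q.2 + (s:ℂ)) : ℂ × ℂ))) (Iic 0) s :=
      ContinuousWithinAt.comp (hfc _ (hcl_shift q hq s hs)) h1
        (fun s' hs' => hcl_shift q hq s' hs')
    exact h2
  have hptbd : ∀ q ∈ closure S, ∀ s ∈ Iic (0:ℝ),
      ‖f (q.1 + (s:ℂ)) (q.2 + (s:ℂ))‖ ≤ Kf / (c * (‖q.2‖ - s)) ^ p := by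
    intro q hq s hs
    rw [mem_Iic] at hs
    have hq2 : q.2 ∈ DminusCl θ r := by rw [hclS] at hq; exact hq.2
    have habs2 : c * (‖q.2‖ - s) ≤ ‖(q.2 + (s:ℂ))‖ := by
      have h5 := key_lower hθ hθ4 (by linarith : (0:ℝ) ≤ r) hq2 (t := -s) (by linarith)
      have e : q.2 - ((-s : ℝ):ℂ) = q.2 + (s:ℂ) := by push_cast; ring
      rw [e] at h5
      calc c * (‖q.2‖ - s) = Real.sin θ / 4 * (‖q.2‖ + -s) := by
            rw [hcdef]; ring
        _ ≤ _ := h5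
    have hb := hfb' _ (hcl_shift q hq s hs)
    refine hb.trans ?_
    have hB := habs q.2 hq2
    have hpos : 0 < c * (‖q.2‖ - s) := by nlinarith
    have h2 : (c * (‖q.2‖ - s)) ^ p ≤ ‖(q.2 + (s:ℂ))‖ ^ p :=
      Real.rpow_le_rpow hpos.le habs2 (by linarith)
    have h3 : 0 < (c * (‖q.2‖ - s)) ^ p := Real.rpow_pos_of_pos hpos p
    exact div_le_div_of_nonneg_left hKf.le h3 h2
  have hInt : ∀ q ∈ closure S, IntegrableOn (fun s : ℝ => f (q.1 + (s:ℂ)) (q.2 + (s:ℂ))) (Iic 0) := by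
    intro q hq
    have hB : 0 < ‖q.2‖ := by
      have := habs q.2 (by rw [hclS] at hq; exact hq.2); linarith
    apply Integrable.mono' (integrable_decay hc hB hp Kf) (hmeas q hq)
    rw [ae_restrict_iff' measurableSet_Iic]
    exact MeasureTheory.ae_of_all _ (fun s hs => hptbd q hq s hs)
  refine ⟨fun φ τ => ∫ s in Iic (0:ℝ), f (φ + (s:ℂ)) (τ + (s:ℂ)),
    fun φ _ τ _ => rfl, ?_, ?_, ?_, ?_⟩
  · -- periodicity
    intro φ τ
    have e : (fun s : ℝ => f (φ + 2 * Real.pi + (s:ℂ)) (τ + (s:ℂ)))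
        = fun s : ℝ => f (φ + (s:ℂ)) (τ + (s:ℂ)) := by
      funext s
      rw [show φ + 2 * (Real.pi:ℂ) + (s:ℂ) = (φ + (s:ℂ)) + 2 * Real.pi by ring, hper]
    show (∫ s in Iic (0:ℝ), f (φ + 2 * Real.pi + (s:ℂ)) (τ + (s:ℂ))) = _
    rw [e]
  · -- analyticity
    intro q₀ hq₀
    have hφ₀ : q₀.1 ∈ Strip h := hq₀.1
    have hτ₀ : q₀.2 ∈ Dminus θ r := hq₀.2
    have hτ₀cl : q₀.2 ∈ DminusCl θ r := Dminus_subset_cl hθ hθ4 r hτ₀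
    set B₀ : ℝ := ‖q₀.2‖ with hB₀def
    have hB₀ : 0 < B₀ := by have := habs q₀.2 hτ₀cl; linarith
    set δ₁ : ℝ := h - |q₀.1.im| with hδ₁def
    have hδ₁ : 0 < δ₁ := by
      have : |q₀.1.im| < h := hφ₀
      simp only [hδ₁def]; linarith
    set m₀ : ℝ := Real.cos θ * ‖(q₀.2 + (r:ℂ))‖ - (q₀.2 + (r:ℂ)).re with hm₀def
    have hm₀ : 0 < m₀ := by
      have := (mem_Dminus_iff hθ hθ4).1 hτ₀
      simp only [hm₀def]; linarith
    set R : ℝ := min (δ₁ / 4) (min (m₀ / 8) (B₀ / 8)) with hRdef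
    have hR : 0 < R := by
      apply lt_min (by positivity) (lt_min (by positivity) (by positivity))
    have hRδ : 2 * R ≤ δ₁ / 2 := by
      have := min_le_left (δ₁ / 4) (min (m₀ / 8) (B₀ / 8))
      simp only [← hRdef] at this; linarith
    have hRm : 2 * R ≤ m₀ / 4 := by
      have h1 := min_le_right (δ₁ / 4) (min (m₀ / 8) (B₀ / 8))
      have h2 := min_le_left (m₀ / 8) (B₀ / 8)
      simp only [← hRdef] at h1; linarith
    have hRB : 2 * R ≤ B₀ / 4 := by
      have h1 := min_le_right (δ₁ / 4) (min (m₀ / 8) (B₀ / 8))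
      have h2 := min_le_right (m₀ / 8) (B₀ / 8)
      simp only [← hRdef] at h1; linarith
    have hcospos := cos_pos_aux hθ hθ4
    have hcos1 := cos_lt_one_aux hθ hθ4
    -- key: points of shifted closed balls in the second coordinate
    have hkey : ∀ s : ℝ, s ≤ 0 → ∀ b ∈ closedBall (q₀.2 + (s:ℂ)) (2 * R),
        (b - (s:ℂ)) ∈ Dminus θ r ∧ b ∈ Dminus θ r ∧ c * (B₀ / 2 - s) ≤ ‖b‖ := by
      intro s hs b hb
      have hbs : ‖((b - (s:ℂ)) - q₀.2)‖ ≤ 2 * R := by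
        rw [mem_closedBall, dist_eq_norm] at hb
        rw [show (b - (s:ℂ)) - q₀.2 = b - (q₀.2 + (s:ℂ)) by ring]
        exact hb
      have hbd : (b - (s:ℂ)) ∈ Dminus θ r := by
        rw [mem_Dminus_iff hθ hθ4]
        have h5 : ((b - (s:ℂ)) + (r:ℂ)).re - (q₀.2 + (r:ℂ)).re ≤ 2 * R := by
          have h5a := Complex.abs_re_le_norm (((b - (s:ℂ)) + (r:ℂ)) - (q₀.2 + (r:ℂ)))
          rw [show ((b - (s:ℂ)) + (r:ℂ)) - (q₀.2 + (r:ℂ)) = (b - (s:ℂ)) - q₀.2 by ring] at h5a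
          have h5b := le_abs_self ((((b - (s:ℂ)) + (r:ℂ)) - (q₀.2 + (r:ℂ))).re)
          rw [show ((b - (s:ℂ)) + (r:ℂ)) - (q₀.2 + (r:ℂ)) = (b - (s:ℂ)) - q₀.2 by ring] at h5b
          have h5c : ((b - (s:ℂ)) - q₀.2).re = ((b - (s:ℂ)) + (r:ℂ)).re - (q₀.2 + (r:ℂ)).re := by
            simp [Complex.sub_re, Complex.add_re]
          rw [h5c] at h5a h5b
          linarith [h5b.trans h5a, hbs]
        have h6 : ‖(q₀.2 + (r:ℂ))‖ - 2 * R ≤ ‖((b - (s:ℂ)) + (r:ℂ))‖ := by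
          have h6a := norm_sub_norm_le (q₀.2 + (r:ℂ)) ((q₀.2 + (r:ℂ)) - ((b - (s:ℂ)) + (r:ℂ)))
          simp only [sub_sub_cancel] at h6a
          have h6b : ‖((q₀.2 + (r:ℂ)) - ((b - (s:ℂ)) + (r:ℂ)))‖ ≤ 2 * R := by
            rw [show (q₀.2 + (r:ℂ)) - ((b - (s:ℂ)) + (r:ℂ)) = -((b - (s:ℂ)) - q₀.2) by ring,
              norm_neg]
            exact hbs
          linarith
        nlinarith [mul_le_mul_of_nonneg_left h6 hcospos.le,
          mul_lt_mul_of_pos_right hcos1 (by linarith : (0:ℝ) < 2 * R)]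
      refine ⟨hbd, ?_, ?_⟩
      · have := shift_mem_Dminus' hθ hθ4 hbd hs
        simpa using this
      · have h12 : B₀ - 2 * R ≤ ‖(b - (s:ℂ))‖ := by
          have h12a := norm_sub_norm_le q₀.2 (q₀.2 - (b - (s:ℂ)))
          simp only [sub_sub_cancel] at h12a
          have h12b : ‖(q₀.2 - (b - (s:ℂ)))‖ ≤ 2 * R := by
            rw [show q₀.2 - (b - (s:ℂ)) = -((b - (s:ℂ)) - q₀.2) by ring, norm_neg]
            exact hbs
          simp only [← hB₀def] at h12a ⊢
          linarith
        have h13 := key_lower hθ hθ4 (by linarith : (0:ℝ) ≤ r)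
          (Dminus_subset_cl hθ hθ4 r hbd) (t := -s) (by linarith)
        have e : (b - (s:ℂ)) - ((-s : ℝ):ℂ) = b := by push_cast; ring
        rw [e] at h13
        have : Real.sin θ / 4 * (‖(b - (s:ℂ))‖ + -s) ≤ ‖b‖ := h13
        have hcc : c = Real.sin θ / 4 := hcdef
        nlinarith [norm_nonneg (b - (s:ℂ))]
    have hsubS : ∀ s : ℝ, s ≤ 0 →
        ∀ q ∈ (closedBall (q₀.1 + (s:ℂ)) (2 * R) ×ˢ closedBall (q₀.2 + (s:ℂ)) (2 * R)), q ∈ S := by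
      rintro s hs ⟨a, b⟩ ⟨ha, hb⟩
      constructor
      · show |a.im| < h
        have h1 : ‖(a - (q₀.1 + (s:ℂ)))‖ ≤ 2 * R := by
          rw [mem_closedBall, dist_eq_norm] at ha; exact ha
        have h2 : |a.im - q₀.1.im| ≤ 2 * R := by
          have h2a := Complex.abs_im_le_norm (a - (q₀.1 + (s:ℂ)))
          have e : (a - (q₀.1 + (s:ℂ))).im = a.im - q₀.1.im := by
            simp [Complex.sub_im, Complex.add_im, Complex.ofReal_im]
          rw [e] at h2a
          linarith
        have h3 : |q₀.1.im| < h := hφ₀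
        have h4 := abs_sub_abs_le_abs_sub a.im q₀.1.im
        have h5 : δ₁ = h - |q₀.1.im| := hδ₁def
        linarith
      · exact (hkey s hs b hb).2.1
    -- sup bound on shifted polydiscs
    have hpoly : ∀ s : ℝ, s ≤ 0 → ∀ a ∈ closedBall (q₀.1 + (s:ℂ)) (2 * R),
        ∀ b ∈ closedBall (q₀.2 + (s:ℂ)) (2 * R), ‖f a b‖ ≤ Kf / (c * (B₀ / 2 - s)) ^ p := by
      intro s hs a ha b hb
      have hmemS : ((a, b) : ℂ × ℂ) ∈ S := hsubS s hs (a, b) ⟨ha, hb⟩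
      have hb1 := hfb a hmemS.1 b hmemS.2
      refine hb1.trans ?_
      have h14 := (hkey s hs b hb).2.2
      have hpos : 0 < c * (B₀ / 2 - s) := by nlinarith
      have h2 : (c * (B₀ / 2 - s)) ^ p ≤ ‖b‖ ^ p :=
        Real.rpow_le_rpow hpos.le h14 (by linarith)
      exact div_le_div_of_nonneg_left hKf.le (Real.rpow_pos_of_pos hpos p) h2
    set Msup : ℝ → ℝ := fun s => Kf / (c * (B₀ / 2 - s)) ^ p with hMsupdef
    have hMint : IntegrableOn Msup (Iic 0) := integrable_decay hc (by positivity) hp Kf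
    -- partial derivative of f in the first variable
    set F₁ : ℂ → ℂ → ℂ := fun a b => (fderiv ℂ (fun q : ℂ × ℂ => f q.1 q.2) (a, b)) ((1:ℂ), (0:ℂ))
      with hF₁def
    have hF₁cont : ContinuousOn (fun q : ℂ × ℂ => F₁ q.1 q.2) S := by
      have h14 : ContinuousOn (fderiv ℂ (fun q : ℂ × ℂ => f q.1 q.2)) S :=
        (hfa.fderiv).continuousOn
      exact (ContinuousLinearMap.apply ℂ ℂ ((1:ℂ), (0:ℂ))).continuous.comp_continuousOn h14
    have hslice1 : ∀ a b, ((a, b) : ℂ × ℂ) ∈ S → HasDerivAt (fun z => f z b) (F₁ a b) a := by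
      intro a b hab
      have h15 := (hfa (a, b) hab).differentiableAt.hasFDerivAt
      have h16 : HasDerivAt (fun z : ℂ => ((z, b) : ℂ × ℂ)) ((1:ℂ), (0:ℂ)) a :=
        (hasDerivAt_id a).prodMk (hasDerivAt_const a b)
      exact h15.comp_hasDerivAt a h16
    have hslice2 : ∀ a b, ((a, b) : ℂ × ℂ) ∈ S → DifferentiableAt ℂ (f a) b := by
      intro a b hab
      have h15 := (hfa (a, b) hab).differentiableAt
      have h16 : DifferentiableAt ℂ (fun z : ℂ => ((a, z) : ℂ × ℂ)) b :=
        (differentiableAt_const a).prodMk differentiableAt_id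
      exact h15.comp b h16
    have hds : ∀ s : ℝ, s ≤ 0 →
        (∀ k j, ‖dcoef f (q₀.1 + (s:ℂ)) (q₀.2 + (s:ℂ)) R k j‖ ≤ Msup s / R ^ (k + j)) ∧
        (∀ x y : ℂ, ‖x‖ < R → ‖y‖ < R →
          HasSum (fun kj : ℕ × ℕ =>
              dcoef f (q₀.1 + (s:ℂ)) (q₀.2 + (s:ℂ)) R kj.1 kj.2 * x ^ kj.1 * y ^ kj.2)
            (f ((q₀.1 + (s:ℂ)) + x) ((q₀.2 + (s:ℂ)) + y))) := by
      intro s hs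
      apply doubleSeries f F₁ _ _ R (Msup s) hR
      · intro a ha b hb; exact hslice1 a b (hsubS s hs (a, b) ⟨ha, hb⟩)
      · intro a ha b hb; exact hslice2 a b (hsubS s hs (a, b) ⟨ha, hb⟩)
      · exact hfc.mono (fun q hq => subset_closure (hsubS s hs q hq))
      · exact hF₁cont.mono (fun q hq => hsubS s hs q hq)
      · intro a ha b hb; exact hpoly s hs a ha b hb
    -- continuity of the coefficients in s
    have hmem_cm : ∀ (w : ℂ) (t : ℝ), w + circleMap 0 R t ∈ closedBall w (2 * R) := by
      intro w t
      rw [mem_closedBall, dist_eq_norm, add_sub_cancel_left,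
        norm_circleMap_zero, _root_.abs_of_pos hR]
      linarith
    have hmemf : ∀ s : ℝ, s ≤ 0 → ∀ t₁ t₂ : ℝ,
        (((q₀.1 + (s:ℂ)) + circleMap 0 R t₁, (q₀.2 + (s:ℂ)) + circleMap 0 R t₂) : ℂ × ℂ)
          ∈ closure S := by
      intro s hs t₁ t₂
      exact subset_closure (hsubS s hs _ ⟨hmem_cm (q₀.1 + (s:ℂ)) t₁, hmem_cm (q₀.2 + (s:ℂ)) t₂⟩)
    have hAcont : ∀ k j, ContinuousOn
        (fun s : ℝ => dcoef f (q₀.1 + (s:ℂ)) (q₀.2 + (s:ℂ)) R k j) (Iic 0) := by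
      intro k j
      rw [continuousOn_iff_continuous_restrict]
      have hcm : Continuous fun w : ↥(Iic (0:ℝ)) × ℝ => circleMap 0 R w.2 :=
        (continuous_circleMap 0 R).comp continuous_snd
      have hcmne : ∀ w : ↥(Iic (0:ℝ)) × ℝ, circleMap 0 R w.2 ≠ 0 :=
        fun w => circleMap_ne_center hR.ne'
      have hsc : Continuous fun w : ↥(Iic (0:ℝ)) × ℝ => (((w.1 : ℝ) : ℂ)) :=
        Complex.continuous_ofReal.comp (continuous_subtype_val.comp continuous_fst)
      have hinner : Continuous fun z : ↥(Iic (0:ℝ)) × ℝ =>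
          ccoef f (q₀.2 + (((z.1 : ℝ)) : ℂ)) R j ((q₀.1 + (((z.1 : ℝ)) : ℂ)) + circleMap 0 R z.2) := by
        have e3 : (fun z : ↥(Iic (0:ℝ)) × ℝ =>
            ccoef f (q₀.2 + (((z.1 : ℝ)) : ℂ)) R j ((q₀.1 + (((z.1 : ℝ)) : ℂ)) + circleMap 0 R z.2))
            = fun z => (2 * Real.pi * I)⁻¹ * ∫ t₂ in (0:ℝ)..2 * Real.pi,
                circleMap 0 R t₂ * I * ((circleMap 0 R t₂)⁻¹ ^ j * ((circleMap 0 R t₂)⁻¹ *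
                  f ((q₀.1 + (((z.1 : ℝ)) : ℂ)) + circleMap 0 R z.2)
                    ((q₀.2 + (((z.1 : ℝ)) : ℂ)) + circleMap 0 R t₂))) := by
          funext z; exact ccoef_eq f _ R j _
        rw [e3]
        apply continuous_const.mul
        apply intervalIntegral.continuous_parametric_intervalIntegral_of_continuous'
        -- uncurried integrand
        have hcm1 : Continuous fun w : (↥(Iic (0:ℝ)) × ℝ) × ℝ => circleMap 0 R w.2 :=
          (continuous_circleMap 0 R).comp continuous_snd
        have hcm1ne : ∀ w : (↥(Iic (0:ℝ)) × ℝ) × ℝ, circleMap 0 R w.2 ≠ 0 :=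
          fun w => circleMap_ne_center hR.ne'
        have hfpart : Continuous fun w : (↥(Iic (0:ℝ)) × ℝ) × ℝ =>
            f ((q₀.1 + (((w.1.1 : ℝ)) : ℂ)) + circleMap 0 R w.1.2)
              ((q₀.2 + (((w.1.1 : ℝ)) : ℂ)) + circleMap 0 R w.2) := by
          have hmap : Continuous fun w : (↥(Iic (0:ℝ)) × ℝ) × ℝ =>
              ((((q₀.1 + (((w.1.1 : ℝ)) : ℂ)) + circleMap 0 R w.1.2),
                ((q₀.2 + (((w.1.1 : ℝ)) : ℂ)) + circleMap 0 R w.2)) : ℂ × ℂ) := by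
            apply Continuous.prodMk
            · exact (continuous_const.add ((Complex.continuous_ofReal.comp
                (continuous_subtype_val.comp (continuous_fst.comp continuous_fst))))).add
                ((continuous_circleMap 0 R).comp (continuous_snd.comp continuous_fst))
            · exact (continuous_const.add ((Complex.continuous_ofReal.comp
                (continuous_subtype_val.comp (continuous_fst.comp continuous_fst))))).add
                ((continuous_circleMap 0 R).comp continuous_snd)
          exact hfc.comp_continuous hmap (fun w => hmemf (w.1.1 : ℝ) w.1.1.2 w.1.2 w.2)
        exact (hcm1.mul continuous_const).mul
          (((hcm1.inv₀ hcm1ne).pow j).mul ((hcm1.inv₀ hcm1ne).mul hfpart))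
      have e5 : (Iic (0:ℝ)).domRestrict (fun s => dcoef f (q₀.1 + (s:ℂ)) (q₀.2 + (s:ℂ)) R k j)
          = fun z : ↥(Iic (0:ℝ)) => (2 * Real.pi * I)⁻¹ * ∫ t₁ in (0:ℝ)..2 * Real.pi,
              circleMap 0 R t₁ * I * ((circleMap 0 R t₁)⁻¹ ^ k * ((circleMap 0 R t₁)⁻¹ *
                ccoef f (q₀.2 + (((z : ℝ)) : ℂ)) R j ((q₀.1 + (((z : ℝ)) : ℂ)) + circleMap 0 R t₁))) := by
        funext z
        exact dcoef_eq f _ _ R k j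
      rw [e5]
      apply continuous_const.mul
      apply intervalIntegral.continuous_parametric_intervalIntegral_of_continuous'
      have hcm1 : Continuous fun w : ↥(Iic (0:ℝ)) × ℝ => circleMap 0 R w.2 := hcm
      exact (hcm1.mul continuous_const).mul
        (((hcm1.inv₀ hcmne).pow k).mul ((hcm1.inv₀ hcmne).mul hinner))
    have hAint : ∀ k j, IntegrableOn
        (fun s : ℝ => dcoef f (q₀.1 + (s:ℂ)) (q₀.2 + (s:ℂ)) R k j) (Iic 0) := by
      intro k j
      apply Integrable.mono' (hMint.div_const (R ^ (k + j)))
        ((hAcont k j).aestronglyMeasurable measurableSet_Iic)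
      rw [ae_restrict_iff' measurableSet_Iic]
      exact MeasureTheory.ae_of_all _ (fun s hs => (hds s (mem_Iic.1 hs)).1 k j)
    set Bc : ℕ → ℕ → ℂ :=
      fun k j => ∫ s in Iic (0:ℝ), dcoef f (q₀.1 + (s:ℂ)) (q₀.2 + (s:ℂ)) R k j with hBcdef
    set C₀ : ℝ := ∫ s in Iic (0:ℝ), Msup s with hC₀def
    have hC₀0 : 0 ≤ C₀ := by
      apply setIntegral_nonneg measurableSet_Iic
      intro s hs
      have hss : s ≤ 0 := hs
      exact div_nonneg hKf.le (Real.rpow_nonneg (by nlinarith) p)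
    have hBc : ∀ k j, ‖Bc k j‖ ≤ C₀ / R ^ (k + j) := by
      intro k j
      have h21 := norm_integral_le_of_norm_le (hMint.div_const (R ^ (k + j)))
        (by rw [ae_restrict_iff' measurableSet_Iic]
            exact MeasureTheory.ae_of_all _ (fun s hs => (hds s (mem_Iic.1 hs)).1 k j))
      rwa [integral_div] at h21
    set Q : FormalMultilinearSeries ℂ (ℂ × ℂ) ℂ :=
      fun n => ∑ k ∈ Finset.range (n + 1), Bc k (n - k) • mono n k with hQdef
    have hQnorm : ∀ n, ‖Q n‖ ≤ ((n:ℝ) + 1) * (C₀ / R ^ n) := by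
      intro n
      refine (norm_sum_le _ _).trans ?_
      have h17 : ∀ k ∈ Finset.range (n + 1), ‖Bc k (n - k) • mono n k‖ ≤ C₀ / R ^ n := by
        intro k hk
        refine (norm_smul_le (Bc k (n - k)) (mono n k)).trans ?_
        have h18 : ‖Bc k (n - k)‖ ≤ C₀ / R ^ n := by
          have h18a := hBc k (n - k)
          rwa [show k + (n - k) = n by
            have := Finset.mem_range.1 hk; omega] at h18a
        calc ‖Bc k (n - k)‖ * ‖mono n k‖ ≤ (C₀ / R ^ n) * 1 :=
              mul_le_mul h18 (norm_mono_le n k) (norm_nonneg _) (by positivity)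
          _ = C₀ / R ^ n := mul_one _
      calc ∑ k ∈ Finset.range (n + 1), ‖Bc k (n - k) • mono n k‖
          ≤ ∑ _k ∈ Finset.range (n + 1), (C₀ / R ^ n) := Finset.sum_le_sum h17
        _ = ((n:ℝ) + 1) * (C₀ / R ^ n) := by
            rw [Finset.sum_const, Finset.card_range, nsmul_eq_mul]
            push_cast; ring
    have hpow4 : ∀ n : ℕ, ((n:ℝ) + 1) ≤ 4 ^ n := by
      intro n
      have h21 : (n:ℝ) + 1 ≤ (2:ℝ) ^ n := by
        have h21a := Nat.lt_two_pow_self (n := n)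
        have h21b : (n + 1 : ℕ) ≤ 2 ^ n := h21a
        exact_mod_cast h21b
      refine h21.trans ?_
      apply pow_le_pow_left₀ (by norm_num) (by norm_num)
    have hrad : ENNReal.ofReal (R / 4) ≤ Q.radius := by
      have h19 : ∀ n : ℕ, ‖Q n‖ * (((R/4).toNNReal : ℝ)) ^ n ≤ C₀ := by
        intro n
        rw [Real.coe_toNNReal _ (by positivity)]
        have h20 := hQnorm n
        have h23 : (0:ℝ) ≤ (R/4)^n := by positivity
        calc ‖Q n‖ * (R/4)^n ≤ (((n:ℝ)+1) * (C₀ / R^n)) * (R/4)^n :=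
              mul_le_mul_of_nonneg_right h20 h23
          _ = (((n:ℝ)+1)/4^n) * C₀ := by
              rw [div_pow]
              have hRn : (R:ℝ)^n ≠ 0 := by positivity
              have h4n : ((4:ℝ))^n ≠ 0 := by positivity
              field_simp
          _ ≤ 1 * C₀ := by
              apply mul_le_mul_of_nonneg_right _ hC₀0
              rw [div_le_one (by positivity)]
              exact hpow4 n
          _ = C₀ := one_mul _
      exact Q.le_radius_of_bound C₀ (r := (R/4).toNNReal) h19
    have hsum : ∀ v : ℂ × ℂ, v ∈ Metric.eball (0 : ℂ × ℂ) (ENNReal.ofReal (R/4)) →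
        HasSum (fun n => Q n fun _ => v)
          (∫ s in Iic (0:ℝ), f ((q₀ + v).1 + (s:ℂ)) ((q₀ + v).2 + (s:ℂ))) := by
      intro v hv
      have hvn : ‖v‖ < R/4 := by
        rw [mem_eball_zero_iff, ← ofReal_norm,
          ENNReal.ofReal_lt_ofReal_iff (by positivity)] at hv
        exact hv
      have hx : ‖v.1‖ < R := by
        have h30 := norm_fst_le v
        linarith
      have hy : ‖v.2‖ < R := by
        have h30 := norm_snd_le v
        linarith
      have hps : ∀ s ∈ Iic (0:ℝ), HasSum (fun kj : ℕ × ℕ =>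
          dcoef f (q₀.1 + (s:ℂ)) (q₀.2 + (s:ℂ)) R kj.1 kj.2 * v.1 ^ kj.1 * v.2 ^ kj.2)
          (f ((q₀ + v).1 + (s:ℂ)) ((q₀ + v).2 + (s:ℂ))) := by
        intro s hs
        have h24 := (hds s (mem_Iic.1 hs)).2 v.1 v.2 hx hy
        rw [show ((q₀ + v).1 + (s:ℂ)) = ((q₀.1 + (s:ℂ)) + v.1) by
            simp only [Prod.fst_add]; ring,
          show ((q₀ + v).2 + (s:ℂ)) = ((q₀.2 + (s:ℂ)) + v.2) by
            simp only [Prod.snd_add]; ring]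
        exact h24
      have htermint : ∀ kj : ℕ × ℕ, Integrable (fun s : ℝ =>
          dcoef f (q₀.1 + (s:ℂ)) (q₀.2 + (s:ℂ)) R kj.1 kj.2 * v.1 ^ kj.1 * v.2 ^ kj.2)
          (volume.restrict (Iic 0)) :=
        fun kj => ((hAint kj.1 kj.2).mul_const _).mul_const _
      have hqx : ‖v.1‖ / R < 1 := (div_lt_one hR).2 hx
      have hqy : ‖v.2‖ / R < 1 := (div_lt_one hR).2 hy
      have hq0x : 0 ≤ ‖v.1‖ / R := by positivity
      have hq0y : 0 ≤ ‖v.2‖ / R := by positivity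
      have hnormint : Summable (fun kj : ℕ × ℕ => ∫ s in Iic (0:ℝ),
          ‖dcoef f (q₀.1 + (s:ℂ)) (q₀.2 + (s:ℂ)) R kj.1 kj.2 * v.1 ^ kj.1 * v.2 ^ kj.2‖) := by
        have hsum2 : Summable (fun kj : ℕ × ℕ =>
            (C₀ * (‖v.1‖ / R) ^ kj.1) * (‖v.2‖ / R) ^ kj.2) :=
          Summable.mul_of_nonneg ((summable_geometric_of_lt_one hq0x hqx).mul_left C₀)
            (summable_geometric_of_lt_one hq0y hqy)
            (fun k => mul_nonneg hC₀0 (pow_nonneg hq0x k)) (fun j => pow_nonneg hq0y j)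
        apply Summable.of_nonneg_of_le
          (fun kj => integral_nonneg (fun s => norm_nonneg _)) _ hsum2
        rintro ⟨k, j⟩
        have hb1 : ∀ s ∈ Iic (0:ℝ),
            ‖dcoef f (q₀.1 + (s:ℂ)) (q₀.2 + (s:ℂ)) R k j * v.1 ^ k * v.2 ^ j‖
            ≤ Msup s / R ^ (k + j) * (‖v.1‖ ^ k * ‖v.2‖ ^ j) := by
          intro s hs
          have h25 := (hds s (mem_Iic.1 hs)).1 k j
          calc ‖dcoef f (q₀.1 + (s:ℂ)) (q₀.2 + (s:ℂ)) R k j * v.1 ^ k * v.2 ^ j‖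
              = ‖dcoef f (q₀.1 + (s:ℂ)) (q₀.2 + (s:ℂ)) R k j‖ *
                  ‖v.1‖ ^ k * ‖v.2‖ ^ j := by
                simp only [norm_mul, norm_pow]
            _ ≤ Msup s / R ^ (k + j) * ‖v.1‖ ^ k * ‖v.2‖ ^ j := by
                have h26 : (0:ℝ) ≤ ‖v.1‖ ^ k := by positivity
                have h27 : (0:ℝ) ≤ ‖v.2‖ ^ j := by positivity
                gcongr
            _ = Msup s / R ^ (k + j) * (‖v.1‖ ^ k * ‖v.2‖ ^ j) := by ring
        calc (∫ s in Iic (0:ℝ),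
              ‖dcoef f (q₀.1 + (s:ℂ)) (q₀.2 + (s:ℂ)) R k j * v.1 ^ k * v.2 ^ j‖)
            ≤ ∫ s in Iic (0:ℝ),
                Msup s / R ^ (k + j) * (‖v.1‖ ^ k * ‖v.2‖ ^ j) :=
              setIntegral_mono_on (htermint (k, j)).norm
                ((hMint.div_const _).mul_const _) measurableSet_Iic hb1
          _ = (C₀ / R ^ (k+j)) * (‖v.1‖ ^ k * ‖v.2‖ ^ j) := by
              rw [integral_mul_const, integral_div]
          _ = (C₀ * (‖v.1‖ / R) ^ k) * (‖v.2‖ / R) ^ j := by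
              rw [pow_add, div_pow, div_pow]
              have hRk : (R:ℝ) ^ k ≠ 0 := by positivity
              have hRj : (R:ℝ) ^ j ≠ 0 := by positivity
              field_simp
      have hswap := MeasureTheory.hasSum_integral_of_summable_integral_norm htermint hnormint
      have hinteq : (∫ s in Iic (0:ℝ), ∑' kj : ℕ × ℕ,
          dcoef f (q₀.1 + (s:ℂ)) (q₀.2 + (s:ℂ)) R kj.1 kj.2 * v.1 ^ kj.1 * v.2 ^ kj.2)
          = ∫ s in Iic (0:ℝ), f ((q₀ + v).1 + (s:ℂ)) ((q₀ + v).2 + (s:ℂ)) := by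
        apply setIntegral_congr_fun measurableSet_Iic
        intro s hs
        exact (hps s hs).tsum_eq
      rw [hinteq] at hswap
      have hterm : ∀ kj : ℕ × ℕ, (∫ s in Iic (0:ℝ),
          dcoef f (q₀.1 + (s:ℂ)) (q₀.2 + (s:ℂ)) R kj.1 kj.2 * v.1 ^ kj.1 * v.2 ^ kj.2)
          = Bc kj.1 kj.2 * v.1 ^ kj.1 * v.2 ^ kj.2 := by
        intro kj
        rw [show (fun s : ℝ => dcoef f (q₀.1 + (s:ℂ)) (q₀.2 + (s:ℂ)) R kj.1 kj.2 *
            v.1 ^ kj.1 * v.2 ^ kj.2)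
          = fun s : ℝ => dcoef f (q₀.1 + (s:ℂ)) (q₀.2 + (s:ℂ)) R kj.1 kj.2 *
            (v.1 ^ kj.1 * v.2 ^ kj.2) from funext (fun s => by ring)]
        rw [integral_mul_const]
        have hBceq : Bc kj.1 kj.2 = ∫ s in Iic (0:ℝ),
            dcoef f (q₀.1 + (s:ℂ)) (q₀.2 + (s:ℂ)) R kj.1 kj.2 := rfl
        rw [hBceq]
        ring
      have hBsum : HasSum (fun kj : ℕ × ℕ => Bc kj.1 kj.2 * v.1 ^ kj.1 * v.2 ^ kj.2)
          (∫ s in Iic (0:ℝ), f ((q₀ + v).1 + (s:ℂ)) ((q₀ + v).2 + (s:ℂ))) := by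
        rw [show (fun kj : ℕ × ℕ => Bc kj.1 kj.2 * v.1 ^ kj.1 * v.2 ^ kj.2)
          = fun kj : ℕ × ℕ => ∫ s in Iic (0:ℝ),
              dcoef f (q₀.1 + (s:ℂ)) (q₀.2 + (s:ℂ)) R kj.1 kj.2 * v.1 ^ kj.1 * v.2 ^ kj.2
          from funext (fun kj => (hterm kj).symm)]
        exact hswap
      have hsig := (Finset.HasAntidiagonal.sigmaAntidiagonalEquivProd (A := ℕ)).hasSum_iff.2 hBsum
      have hfib2 : ∀ n : ℕ, HasSum (fun p : (Finset.HasAntidiagonal.antidiagonal n : Finset (ℕ × ℕ)) =>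
          Bc (p : ℕ × ℕ).1 (p : ℕ × ℕ).2 * v.1 ^ (p : ℕ × ℕ).1 * v.2 ^ (p : ℕ × ℕ).2)
          (∑ p ∈ Finset.HasAntidiagonal.antidiagonal n, Bc p.1 p.2 * v.1 ^ p.1 * v.2 ^ p.2) := by
        intro n
        have h28 := hasSum_fintype (fun p : (Finset.HasAntidiagonal.antidiagonal n : Finset (ℕ × ℕ)) =>
          Bc (p : ℕ × ℕ).1 (p : ℕ × ℕ).2 * v.1 ^ (p : ℕ × ℕ).1 * v.2 ^ (p : ℕ × ℕ).2)
        rwa [Finset.sum_coe_sort (Finset.HasAntidiagonal.antidiagonal n)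
          (fun q : ℕ × ℕ => Bc q.1 q.2 * v.1 ^ q.1 * v.2 ^ q.2)] at h28
      have hreg := HasSum.sigma hsig hfib2
      have hQv : ∀ n, (Q n fun _ => v) = ∑ p ∈ Finset.HasAntidiagonal.antidiagonal n,
          Bc p.1 p.2 * v.1 ^ p.1 * v.2 ^ p.2 := by
        intro n
        rw [Finset.Nat.sum_antidiagonal_eq_sum_range_succ_mk]
        show (∑ k ∈ Finset.range (n + 1), Bc k (n - k) • mono n k) (fun _ => v) = _
        rw [ContinuousMultilinearMap.sum_apply]
        apply Finset.sum_congr rfl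
        intro k hk
        rw [ContinuousMultilinearMap.smul_apply,
          mono_apply n k (Nat.lt_succ_iff.1 (Finset.mem_range.1 hk)), smul_eq_mul]
        ring
      rw [show (fun n => Q n fun _ => v) = fun n => ∑ p ∈ Finset.HasAntidiagonal.antidiagonal n,
          Bc p.1 p.2 * v.1 ^ p.1 * v.2 ^ p.2 from funext hQv]
      exact hreg
    exact HasFPowerSeriesOnBall.analyticAt
      (⟨hrad, ENNReal.ofReal_pos.2 (by positivity), fun {v} hv => hsum v hv⟩ :
        HasFPowerSeriesOnBall (fun q : ℂ × ℂ =>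
          ∫ s in Iic (0:ℝ), f (q.1 + (s:ℂ)) (q.2 + (s:ℂ))) Q q₀ (ENNReal.ofReal (R/4)))
  · -- continuity on the closure
    intro q₀ hq₀
    have hB₀ : 0 < ‖q₀.2‖ := by
      have := habs q₀.2 (by rw [hclS] at hq₀; exact hq₀.2); linarith
    refine MeasureTheory.tendsto_integral_filter_of_dominated_convergence
      (bound := fun s => Kf / (c * (‖q₀.2‖ / 2 - s)) ^ p) ?_ ?_ ?_ ?_
    · filter_upwards [eventually_mem_nhdsWithin] with q hq
      exact hmeas q hq
    · have h8 : ∀ᶠ q in nhdsWithin q₀ (closure S), dist q q₀ < ‖q₀.2‖ / 2 := by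
        apply Filter.Eventually.filter_mono nhdsWithin_le_nhds
        have h9 : ∀ᶠ q in nhds q₀, q ∈ Metric.ball q₀ (‖q₀.2‖ / 2) :=
          Metric.isOpen_ball.eventually_mem (mem_ball_self (by positivity))
        filter_upwards [h9] with q hq
        exact mem_ball.1 hq
      filter_upwards [eventually_mem_nhdsWithin, h8] with q hq hdist
      rw [ae_restrict_iff' measurableSet_Iic]
      apply MeasureTheory.ae_of_all
      intro s hs
      refine (hptbd q hq s hs).trans ?_
      have hd2 : dist q.2 q₀.2 ≤ dist q q₀ := by
        rw [Prod.dist_eq]; exact le_max_right _ _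
      have h10 : ‖q₀.2‖ / 2 ≤ ‖q.2‖ := by
        have h11 := abs_norm_sub_norm_le q.2 q₀.2
        rw [← dist_eq_norm] at h11
        have h12 := abs_le.1 h11
        linarith [h12.1, hd2]
      rw [mem_Iic] at hs
      have hpos : 0 < c * (‖q₀.2‖ / 2 - s) := by nlinarith
      have h2 : (c * (‖q₀.2‖ / 2 - s)) ^ p ≤ (c * (‖q.2‖ - s)) ^ p :=
        Real.rpow_le_rpow hpos.le (by nlinarith) (by linarith)
      exact div_le_div_of_nonneg_left hKf.le (Real.rpow_pos_of_pos hpos p) h2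
    · exact integrable_decay hc (by positivity) hp Kf
    · rw [ae_restrict_iff' measurableSet_Iic]
      apply MeasureTheory.ae_of_all
      intro s hs
      have hql : ((q₀.1 + (s:ℂ), q₀.2 + (s:ℂ)) : ℂ × ℂ) ∈ closure S := hcl_shift q₀ hq₀ s hs
      have hshift : Filter.Tendsto (fun q : ℂ × ℂ => ((q.1 + (s:ℂ), q.2 + (s:ℂ)) : ℂ × ℂ))
          (nhdsWithin q₀ (closure S)) (nhdsWithin ((q₀.1 + (s:ℂ), q₀.2 + (s:ℂ))) (closure S)) := by
        rw [tendsto_nhdsWithin_iff]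
        constructor
        · exact (Continuous.tendsto (by continuity) q₀).mono_left nhdsWithin_le_nhds
        · filter_upwards [eventually_mem_nhdsWithin] with q hq
          exact hcl_shift q hq s hs
      exact ((hfc _ hql).tendsto).comp hshift
  · -- norm bound
    intro φ hφ τ hτ
    have hτcl : τ ∈ DminusCl θ r := Dminus_subset_cl hθ hθ4 r hτ
    have hB : 0 < ‖τ‖ := by have := habs τ hτcl; linarith
    have hqcl : ((φ, τ) : ℂ × ℂ) ∈ closure S := subset_closure ⟨hφ, hτ⟩
    have hbd : ∀ᵐ (s : ℝ) ∂(volume.restrict (Iic (0:ℝ))),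
        ‖f (φ + (s:ℂ)) (τ + (s:ℂ))‖ ≤ Kf / (c * (‖τ‖ - s)) ^ p := by
      rw [ae_restrict_iff' measurableSet_Iic]
      exact MeasureTheory.ae_of_all _ (fun s hs => hptbd (φ, τ) hqcl s hs)
    have h1 := norm_integral_le_of_norm_le (integrable_decay hc hB hp Kf) hbd
    rw [integral_decay hc hB hp Kf] at h1
    refine h1.trans (le_of_eq ?_)
    have e1 : c⁻¹ = 4 / Real.sin θ := by
      rw [hcdef, inv_div]
    have e2 : ‖τ‖ ^ (1 - p) = (‖τ‖ ^ (p - 1))⁻¹ := by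
      rw [show (1 - p : ℝ) = -(p - 1) by ring, Real.rpow_neg hB.le]
    rw [e1, e2, div_eq_mul_inv, div_eq_mul_inv, div_eq_mul_inv]
    ring
end
end
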